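/- arXiv:2306.12378 — 7 statements merged into one kernel-verified Lean document; each statement's English description precedes it below -/
import Mathlib

section
/- For f, g ∈ L¹(ℝ), the Hartley–Fourier generalized convolution (f ∗_{H₁,F} g)(x) = (1/(2√(2π))) ∫_ℝ g(y)[f(x+y) + f(x−y) + i f(−x−y) − i f(−x+y)] dy belongs to L¹(ℝ) and satisfies ‖f ∗_{H₁,F} g‖_{L¹(ℝ)} ≤ √(2/π) ‖f‖_{L¹(ℝ)} ‖g‖_{L¹(ℝ)}. -/
open MeasureTheory Real Complex Filter Topology
open scoped Convolution

noncomputable def HFconv (f g : ℝ → ℂ) (x : ℝ) : ℂ :=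
  (1 / (2 * Real.sqrt (2 * Real.pi))) *
    ∫ y : ℝ, g y * (f (x + y) + f (x - y) + Complex.I * f (-x - y) - Complex.I * f (-x + y))

lemma conv_norm_integral_le (u v : ℝ → ℂ) (hu : Integrable u) (hv : Integrable v) :
    ∫ x : ℝ, ‖(u ⋆[ContinuousLinearMap.mul ℂ ℂ] v) x‖ ≤
      (∫ x : ℝ, ‖u x‖) * (∫ x : ℝ, ‖v x‖) := by
  have hk : Integrable (u ⋆[ContinuousLinearMap.mul ℂ ℂ] v) :=
    hu.integrable_convolution _ hv
  have hnorm : Integrable ((fun x => ‖u x‖) ⋆[ContinuousLinearMap.mul ℝ ℝ] (fun x => ‖v x‖)) :=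
    hu.norm.integrable_convolution _ hv.norm
  have hpt : ∀ x : ℝ, ‖(u ⋆[ContinuousLinearMap.mul ℂ ℂ] v) x‖ ≤
      ((fun x => ‖u x‖) ⋆[ContinuousLinearMap.mul ℝ ℝ] (fun x => ‖v x‖)) x := by
    intro x
    simp only [convolution_def, ContinuousLinearMap.mul_apply']
    calc ‖∫ t : ℝ, u t * v (x - t)‖ ≤ ∫ t : ℝ, ‖u t * v (x - t)‖ :=
          norm_integral_le_integral_norm _
      _ = ∫ t : ℝ, ‖u t‖ * ‖v (x - t)‖ := by simp [norm_mul]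
  calc ∫ x : ℝ, ‖(u ⋆[ContinuousLinearMap.mul ℂ ℂ] v) x‖
      ≤ ∫ x : ℝ, ((fun x => ‖u x‖) ⋆[ContinuousLinearMap.mul ℝ ℝ] (fun x => ‖v x‖)) x :=
        integral_mono hk.norm hnorm hpt
    _ = (∫ x : ℝ, ‖u x‖) * (∫ x : ℝ, ‖v x‖) := by
        rw [integral_convolution _ hu.norm hv.norm, ContinuousLinearMap.mul_apply']

set_option maxHeartbeats 1000000 in
theorem stmt0 (f g : ℝ → ℂ) (hf : Integrable f) (hg : Integrable g) :
    Integrable (HFconv f g) ∧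
      ∫ x : ℝ, ‖HFconv f g x‖ ≤
        Real.sqrt (2 / Real.pi) * (∫ x : ℝ, ‖f x‖) * (∫ x : ℝ, ‖g x‖) := by
  set L := ContinuousLinearMap.mul ℂ ℂ with hL
  set G : ℝ → ℂ := fun y => g (-y) with hGdef
  have hG : Integrable G := hg.comp_neg
  set k₁ : ℝ → ℂ := G ⋆[L] f with hk₁def
  set k₂ : ℝ → ℂ := g ⋆[L] f with hk₂def
  have hk₁ : Integrable k₁ := hG.integrable_convolution L hf
  have hk₂ : Integrable k₂ := hg.integrable_convolution L hf
  set c : ℂ := 1 / (2 * (Real.sqrt (2 * Real.pi) : ℂ)) with hc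
  set h : ℝ → ℂ := fun x => c * (k₁ x + k₂ x + Complex.I * k₂ (-x) - Complex.I * k₁ (-x))
    with hhdef
  -- a.e. facts
  have hneg : Filter.Tendsto (fun x : ℝ => -x) (ae volume) (ae volume) :=
    (Measure.measurePreserving_neg (volume : Measure ℝ)).quasiMeasurePreserving.tendsto_ae
  have A₁ : ∀ᵐ x : ℝ, ConvolutionExistsAt G f x L := hG.ae_convolution_exists L hf
  have A₂ : ∀ᵐ x : ℝ, ConvolutionExistsAt g f x L := hg.ae_convolution_exists L hf
  have A₃ : ∀ᵐ x : ℝ, ConvolutionExistsAt g f (-x) L := hneg.eventually A₂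
  have A₄ : ∀ᵐ x : ℝ, ConvolutionExistsAt G f (-x) L := hneg.eventually A₁
  have hae : HFconv f g =ᵐ[volume] h := by
    filter_upwards [A₁, A₂, A₃, A₄] with x h1 h2 h3 h4
    have e1 : Integrable (fun t : ℝ => G t * f (x - t)) := by
      simpa only [ConvolutionExistsAt, hL, ContinuousLinearMap.mul_apply'] using h1
    have e2 : Integrable (fun t : ℝ => g t * f (x - t)) := by
      simpa only [ConvolutionExistsAt, hL, ContinuousLinearMap.mul_apply'] using h2
    have e3 : Integrable (fun t : ℝ => g t * f (-x - t)) := by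
      simpa only [ConvolutionExistsAt, hL, ContinuousLinearMap.mul_apply'] using h3
    have e4 : Integrable (fun t : ℝ => G t * f (-x - t)) := by
      simpa only [ConvolutionExistsAt, hL, ContinuousLinearMap.mul_apply'] using h4
    have e1' : Integrable (fun y : ℝ => g y * f (x + y)) := by
      have := e1.comp_neg
      simpa only [hGdef, neg_neg, sub_neg_eq_add] using this
    have e4' : Integrable (fun y : ℝ => g y * f (-x + y)) := by
      have := e4.comp_neg
      simpa only [hGdef, neg_neg, sub_neg_eq_add] using this
    have hsplit : (fun y : ℝ => g y *
        (f (x + y) + f (x - y) + Complex.I * f (-x - y) - Complex.I * f (-x + y)))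
        = fun y : ℝ => g y * f (x + y) + g y * f (x - y)
            + Complex.I * (g y * f (-x - y)) - Complex.I * (g y * f (-x + y)) := by
      funext y; ring
    have key : (∫ y : ℝ, g y *
        (f (x + y) + f (x - y) + Complex.I * f (-x - y) - Complex.I * f (-x + y)))
        = (∫ y : ℝ, g y * f (x + y)) + (∫ y : ℝ, g y * f (x - y))
          + Complex.I * (∫ y : ℝ, g y * f (-x - y))
          - Complex.I * (∫ y : ℝ, g y * f (-x + y)) := by
      have E2 : Integrable (fun y : ℝ => g y * f (x + y) + g y * f (x - y)) := by
        exact e1'.add e2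
      have E3 : Integrable (fun y : ℝ => g y * f (x + y) + g y * f (x - y)
          + Complex.I * (g y * f (-x - y))) := by
        exact E2.add (e3.const_mul Complex.I)
      rw [hsplit, integral_sub E3 (e4'.const_mul Complex.I),
        integral_add E2 (e3.const_mul Complex.I), integral_add e1' e2,
        integral_const_mul, integral_const_mul]
    have i1 : (∫ y : ℝ, g y * f (x + y)) = k₁ x := by
      rw [hk₁def, hL, convolution_def]
      simp only [ContinuousLinearMap.mul_apply']
      rw [← integral_neg_eq_self (fun t : ℝ => G t * f (x - t)) volume]
      simp only [hGdef, neg_neg, sub_neg_eq_add]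
    have i2 : (∫ y : ℝ, g y * f (x - y)) = k₂ x := by
      simp only [hk₂def, hL, convolution_def, ContinuousLinearMap.mul_apply']
    have i3 : (∫ y : ℝ, g y * f (-x - y)) = k₂ (-x) := by
      simp only [hk₂def, hL, convolution_def, ContinuousLinearMap.mul_apply']
    have i4 : (∫ y : ℝ, g y * f (-x + y)) = k₁ (-x) := by
      rw [hk₁def, hL, convolution_def]
      simp only [ContinuousLinearMap.mul_apply']
      rw [← integral_neg_eq_self (fun t : ℝ => G t * f (-x - t)) volume]
      simp only [hGdef, neg_neg, sub_neg_eq_add]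
    simp only [HFconv, hhdef, hc, key, i1, i2, i3, i4]
  have hint : Integrable h := by
    apply Integrable.const_mul
    exact ((hk₁.add hk₂).add ((hk₂.comp_neg).const_mul _)).sub ((hk₁.comp_neg).const_mul _)
  refine ⟨(integrable_congr hae).mpr hint, ?_⟩
  -- the norm bound
  have hsqrt_pos : 0 < Real.sqrt (2 * Real.pi) :=
    Real.sqrt_pos.mpr (by positivity)
  set c' : ℝ := 1 / (2 * Real.sqrt (2 * Real.pi)) with hc'
  have hc'pos : 0 < c' := by positivity
  have hnormc : ‖c‖ = c' := by
    have : c = ((c' : ℝ) : ℂ) := by rw [hc, hc']; push_cast; ring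
    rw [this, Complex.norm_real, Real.norm_eq_abs, abs_of_pos hc'pos]
  have hbd : ∀ x : ℝ, ‖h x‖ ≤ c' * (‖k₁ x‖ + ‖k₂ x‖ + ‖k₂ (-x)‖ + ‖k₁ (-x)‖) := by
    intro x
    rw [hhdef]
    simp only [norm_mul, hnormc]
    gcongr
    calc ‖k₁ x + k₂ x + Complex.I * k₂ (-x) - Complex.I * k₁ (-x)‖
        ≤ ‖k₁ x + k₂ x + Complex.I * k₂ (-x)‖ + ‖Complex.I * k₁ (-x)‖ := norm_sub_le _ _
      _ ≤ ‖k₁ x + k₂ x‖ + ‖Complex.I * k₂ (-x)‖ + ‖Complex.I * k₁ (-x)‖ := by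
          gcongr; exact norm_add_le _ _
      _ ≤ ‖k₁ x‖ + ‖k₂ x‖ + ‖Complex.I * k₂ (-x)‖ + ‖Complex.I * k₁ (-x)‖ := by
          gcongr; exact norm_add_le _ _
      _ = ‖k₁ x‖ + ‖k₂ x‖ + ‖k₂ (-x)‖ + ‖k₁ (-x)‖ := by
          simp [norm_mul]
  have hrhs_int : Integrable (fun x : ℝ => c' * (‖k₁ x‖ + ‖k₂ x‖ + ‖k₂ (-x)‖ + ‖k₁ (-x)‖)) := by
    apply Integrable.const_mul
    exact ((hk₁.norm.add hk₂.norm).add hk₂.norm.comp_neg).add hk₁.norm.comp_neg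
  have step1 : ∫ x : ℝ, ‖HFconv f g x‖ = ∫ x : ℝ, ‖h x‖ :=
    integral_congr_ae (hae.mono fun x hx => congrArg Norm.norm hx)
  have step2 : ∫ x : ℝ, ‖h x‖ ≤
      ∫ x : ℝ, c' * (‖k₁ x‖ + ‖k₂ x‖ + ‖k₂ (-x)‖ + ‖k₁ (-x)‖) :=
    integral_mono hint.norm hrhs_int hbd
  have step3 : (∫ x : ℝ, c' * (‖k₁ x‖ + ‖k₂ x‖ + ‖k₂ (-x)‖ + ‖k₁ (-x)‖))
      = c' * (2 * (∫ x : ℝ, ‖k₁ x‖) + 2 * (∫ x : ℝ, ‖k₂ x‖)) := by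
    have N1 : Integrable (fun x : ℝ => ‖k₁ x‖ + ‖k₂ x‖) := by exact hk₁.norm.add hk₂.norm
    have N2 : Integrable (fun x : ℝ => ‖k₁ x‖ + ‖k₂ x‖ + ‖k₂ (-x)‖) := by
      exact N1.add hk₂.norm.comp_neg
    rw [integral_const_mul]
    congr 1
    rw [integral_add N2 hk₁.norm.comp_neg, integral_add N1 hk₂.norm.comp_neg,
      integral_add hk₁.norm hk₂.norm,
      integral_neg_eq_self (fun x => ‖k₂ x‖) volume,
      integral_neg_eq_self (fun x => ‖k₁ x‖) volume]
    ring
  have hGnorm : (∫ x : ℝ, ‖G x‖) = ∫ x : ℝ, ‖g x‖ :=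
    integral_neg_eq_self (fun x => ‖g x‖) volume
  have b1 : (∫ x : ℝ, ‖k₁ x‖) ≤ (∫ x : ℝ, ‖g x‖) * (∫ x : ℝ, ‖f x‖) := by
    have := conv_norm_integral_le G f hG hf
    rwa [hGnorm] at this
  have b2 : (∫ x : ℝ, ‖k₂ x‖) ≤ (∫ x : ℝ, ‖g x‖) * (∫ x : ℝ, ‖f x‖) :=
    conv_norm_integral_le g f hg hf
  have hconst : c' * 4 = Real.sqrt (2 / Real.pi) := by
    have h4 : Real.sqrt (2 / Real.pi) = 2 / Real.sqrt (2 * Real.pi) := by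
      rw [show (2 / Real.pi : ℝ) = 4 / (2 * Real.pi) by ring,
        Real.sqrt_div (by norm_num : (0:ℝ) ≤ 4),
        show (4:ℝ) = 2 ^ 2 by norm_num, Real.sqrt_sq (by norm_num : (0:ℝ) ≤ 2)]
    rw [hc', h4]; field_simp; ring
  calc ∫ x : ℝ, ‖HFconv f g x‖
      ≤ c' * (2 * (∫ x : ℝ, ‖k₁ x‖) + 2 * (∫ x : ℝ, ‖k₂ x‖)) := by
        rw [step1]; exact step2.trans (le_of_eq step3)
    _ ≤ c' * (4 * ((∫ x : ℝ, ‖g x‖) * (∫ x : ℝ, ‖f x‖))) := by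
        have := add_le_add (mul_le_mul_of_nonneg_left b1 (by norm_num : (0:ℝ) ≤ 2))
          (mul_le_mul_of_nonneg_left b2 (by norm_num : (0:ℝ) ≤ 2))
        nlinarith [hc'pos.le]
    _ = Real.sqrt (2 / Real.pi) * (∫ x : ℝ, ‖f x‖) * (∫ x : ℝ, ‖g x‖) := by
        rw [← hconst]; ring
end

section
/- Let p, q, r ∈ (1, ∞) satisfy 1/p + 1/q + 1/r = 2. Then for all g ∈ L^p(ℝ), f ∈ L^q(ℝ), h ∈ L^r(ℝ), one has |∫_ℝ (f ∗_{H₁,F} g)(x) · h(x) dx| ≤ √(2/π) ‖g‖_{L^p(ℝ)} ‖f‖_{L^q(ℝ)} ‖h‖_{L^r(ℝ)}. -/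
open MeasureTheory Real Complex Filter Topology

section YoungHelpers

open Measure

private lemma lint_neg (φ : ℝ → ENNReal) : ∫⁻ x, φ (-x) = ∫⁻ x, φ x := by
  conv_rhs => rw [← Measure.map_neg_eq_self (volume : Measure ℝ)]
  exact (lintegral_map_equiv φ (MeasurableEquiv.neg ℝ)).symm

private lemma lint_prod_neg_fst (φ : ℝ × ℝ → ENNReal) :
    ∫⁻ z : ℝ × ℝ, φ (-z.1, z.2) ∂((volume : Measure ℝ).prod volume)
      = ∫⁻ z, φ z ∂((volume : Measure ℝ).prod volume) := by
  have h : MeasurePreserving (fun z : ℝ × ℝ => (-z.1, z.2))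
      ((volume : Measure ℝ).prod volume) ((volume : Measure ℝ).prod volume) :=
    (Measure.measurePreserving_neg volume).prod (MeasurePreserving.id volume)
  have he : MeasurableEmbedding (fun z : ℝ × ℝ => (-z.1, z.2)) :=
    (MeasurableEquiv.prodCongr (MeasurableEquiv.neg ℝ) (MeasurableEquiv.refl ℝ)).measurableEmbedding
  exact h.lintegral_comp_emb he φ

private lemma lint_prod_neg_snd (φ : ℝ × ℝ → ENNReal) :
    ∫⁻ z : ℝ × ℝ, φ (z.1, -z.2) ∂((volume : Measure ℝ).prod volume)
      = ∫⁻ z, φ z ∂((volume : Measure ℝ).prod volume) := by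
  have h : MeasurePreserving (fun z : ℝ × ℝ => (z.1, -z.2))
      ((volume : Measure ℝ).prod volume) ((volume : Measure ℝ).prod volume) :=
    (MeasurePreserving.id volume).prod (Measure.measurePreserving_neg volume)
  have he : MeasurableEmbedding (fun z : ℝ × ℝ => (z.1, -z.2)) :=
    (MeasurableEquiv.prodCongr (MeasurableEquiv.refl ℝ) (MeasurableEquiv.neg ℝ)).measurableEmbedding
  exact h.lintegral_comp_emb he φ

private lemma aem_fst {F : ℝ → ENNReal} (hF : AEMeasurable F volume) :
    AEMeasurable (fun z : ℝ × ℝ => F z.1) ((volume : Measure ℝ).prod volume) :=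
  hF.comp_quasiMeasurePreserving Measure.quasiMeasurePreserving_fst

private lemma aem_snd {F : ℝ → ENNReal} (hF : AEMeasurable F volume) :
    AEMeasurable (fun z : ℝ × ℝ => F z.2) ((volume : Measure ℝ).prod volume) :=
  hF.comp_quasiMeasurePreserving Measure.quasiMeasurePreserving_snd

private lemma aem_add {F : ℝ → ENNReal} (hF : AEMeasurable F volume) :
    AEMeasurable (fun z : ℝ × ℝ => F (z.1 + z.2)) ((volume : Measure ℝ).prod volume) :=
  (aem_fst hF).comp_quasiMeasurePreserving
    (measurePreserving_add_prod volume volume).quasiMeasurePreserving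

private lemma aem_prod_neg_fst {F : ℝ × ℝ → ENNReal}
    (hF : AEMeasurable F ((volume : Measure ℝ).prod volume)) :
    AEMeasurable (fun z : ℝ × ℝ => F (-z.1, z.2)) ((volume : Measure ℝ).prod volume) :=
  hF.comp_quasiMeasurePreserving
    (((Measure.measurePreserving_neg volume).prod
      (MeasurePreserving.id volume)).quasiMeasurePreserving)

private lemma aem_prod_neg_snd {F : ℝ × ℝ → ENNReal}
    (hF : AEMeasurable F ((volume : Measure ℝ).prod volume)) :
    AEMeasurable (fun z : ℝ × ℝ => F (z.1, -z.2)) ((volume : Measure ℝ).prod volume) :=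
  hF.comp_quasiMeasurePreserving
    (((MeasurePreserving.id volume).prod
      (Measure.measurePreserving_neg volume)).quasiMeasurePreserving)

private lemma aem_shift {F : ℝ → ENNReal} (hF : AEMeasurable F volume) (x : ℝ) :
    AEMeasurable (fun y => F (x + y)) volume :=
  hF.comp_quasiMeasurePreserving (measurePreserving_add_left volume x).quasiMeasurePreserving

private lemma aem_shiftr {F : ℝ → ENNReal} (hF : AEMeasurable F volume) (y : ℝ) :
    AEMeasurable (fun x => F (x + y)) volume :=
  hF.comp_quasiMeasurePreserving (measurePreserving_add_right volume y).quasiMeasurePreserving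

private lemma aem_neg {F : ℝ → ENNReal} (hF : AEMeasurable F volume) :
    AEMeasurable (fun y => F (-y)) volume :=
  hF.comp_quasiMeasurePreserving (Measure.measurePreserving_neg volume).quasiMeasurePreserving

private lemma alg_split (a b c : ENNReal) {e₀ e₁ e₂ : ℝ} (h₀ : 0 ≤ e₀) (h₁ : 0 ≤ e₁)
    (h₂ : 0 ≤ e₂) :
    (a * b) ^ e₀ * (a * c) ^ e₁ * (b * c) ^ e₂
      = a ^ (e₀ + e₁) * b ^ (e₀ + e₂) * c ^ (e₁ + e₂) := by
  rw [ENNReal.mul_rpow_of_nonneg _ _ h₀, ENNReal.mul_rpow_of_nonneg _ _ h₁,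
    ENNReal.mul_rpow_of_nonneg _ _ h₂, ENNReal.rpow_add_of_nonneg _ _ h₀ h₁,
    ENNReal.rpow_add_of_nonneg _ _ h₀ h₂, ENNReal.rpow_add_of_nonneg _ _ h₁ h₂]
  ring

private lemma young_prod {p q r : ℝ} (hp : 1 < p) (hq : 1 < q) (hr : 1 < r)
    (hpqr : 1 / p + 1 / q + 1 / r = 2) {F G H : ℝ → ENNReal}
    (hF : AEMeasurable F volume) (hG : AEMeasurable G volume) (hH : AEMeasurable H volume) :
    ∫⁻ z : ℝ × ℝ, F (z.1 + z.2) * G z.2 * H z.1 ∂((volume : Measure ℝ).prod volume) ≤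
      (∫⁻ t, F t ^ q) ^ (1 / q) * (∫⁻ t, G t ^ p) ^ (1 / p) * (∫⁻ t, H t ^ r) ^ (1 / r) := by
  have hp0 : (0:ℝ) < p := by linarith
  have hq0 : (0:ℝ) < q := by linarith
  have hr0 : (0:ℝ) < r := by linarith
  have hpi : 1 / p ≤ 1 := by rw [div_le_one hp0]; linarith
  have hqi : 1 / q ≤ 1 := by rw [div_le_one hq0]; linarith
  have hri : 1 / r ≤ 1 := by rw [div_le_one hr0]; linarith
  set e₀ := 1 - 1 / r with he₀
  set e₁ := 1 - 1 / p with he₁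
  set e₂ := 1 - 1 / q with he₂
  have h₀ : 0 ≤ e₀ := by rw [he₀]; linarith
  have h₁ : 0 ≤ e₁ := by rw [he₁]; linarith
  have h₂ : 0 ≤ e₂ := by rw [he₂]; linarith
  have hsum : e₀ + e₁ + e₂ = 1 := by rw [he₀, he₁, he₂]; linarith
  have hq' : e₀ + e₁ = 1 / q := by rw [he₀, he₁]; linarith
  have hp' : e₀ + e₂ = 1 / p := by rw [he₀, he₂]; linarith
  have hr' : e₁ + e₂ = 1 / r := by rw [he₁, he₂]; linarith
  set μ2 : Measure (ℝ × ℝ) := (volume : Measure ℝ).prod volume with hμ2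
  set g₀ : ℝ × ℝ → ENNReal := fun z => F (z.1 + z.2) ^ q * G z.2 ^ p with hg₀
  set g₁ : ℝ × ℝ → ENNReal := fun z => F (z.1 + z.2) ^ q * H z.1 ^ r with hg₁
  set g₂ : ℝ × ℝ → ENNReal := fun z => G z.2 ^ p * H z.1 ^ r with hg₂
  have hFz : AEMeasurable (fun z : ℝ × ℝ => F (z.1 + z.2)) μ2 := aem_add hF
  have hGz : AEMeasurable (fun z : ℝ × ℝ => G z.2) μ2 := aem_snd hG
  have hHz : AEMeasurable (fun z : ℝ × ℝ => H z.1) μ2 := aem_fst hH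
  have hg₀m : AEMeasurable g₀ μ2 := (hFz.pow_const q).mul (hGz.pow_const p)
  have hg₁m : AEMeasurable g₁ μ2 := (hFz.pow_const q).mul (hHz.pow_const r)
  have hg₂m : AEMeasurable g₂ μ2 := (hGz.pow_const p).mul (hHz.pow_const r)
  have key : ∀ z : ℝ × ℝ, F (z.1 + z.2) * G z.2 * H z.1
      = g₀ z ^ e₀ * g₁ z ^ e₁ * g₂ z ^ e₂ := by
    intro z
    rw [hg₀, hg₁, hg₂]
    simp only
    rw [alg_split _ _ _ h₀ h₁ h₂, hq', hp', hr', ← ENNReal.rpow_mul, ← ENNReal.rpow_mul,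
      ← ENNReal.rpow_mul, mul_one_div_cancel hq0.ne', mul_one_div_cancel hp0.ne',
      mul_one_div_cancel hr0.ne', ENNReal.rpow_one, ENNReal.rpow_one, ENNReal.rpow_one]
  calc ∫⁻ z, F (z.1 + z.2) * G z.2 * H z.1 ∂μ2
      = ∫⁻ z, g₀ z ^ e₀ * g₁ z ^ e₁ * g₂ z ^ e₂ ∂μ2 := lintegral_congr key
    _ ≤ (∫⁻ z, g₀ z ∂μ2) ^ e₀ * (∫⁻ z, g₁ z ∂μ2) ^ e₁ * (∫⁻ z, g₂ z ∂μ2) ^ e₂ := by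
        have := ENNReal.lintegral_prod_norm_pow_le (μ := μ2) Finset.univ
          (f := ![g₀, g₁, g₂]) (fun i _ => by fin_cases i <;> [exact hg₀m; exact hg₁m; exact hg₂m])
          (p := ![e₀, e₁, e₂]) (by rw [Fin.sum_univ_three]; exact hsum)
          (fun i _ => by fin_cases i <;> [exact h₀; exact h₁; exact h₂])
        simpa [Fin.prod_univ_three] using this
    _ = ((∫⁻ t, F t ^ q) * (∫⁻ t, G t ^ p)) ^ e₀ * ((∫⁻ t, F t ^ q) * (∫⁻ t, H t ^ r)) ^ e₁
          * ((∫⁻ t, G t ^ p) * (∫⁻ t, H t ^ r)) ^ e₂ := by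
        have I₀ : ∫⁻ z, g₀ z ∂μ2 = (∫⁻ t, F t ^ q) * (∫⁻ t, G t ^ p) := by
          rw [hμ2, lintegral_prod_symm _ hg₀m]
          have inner : ∀ y : ℝ, ∫⁻ x, g₀ (x, y) = (∫⁻ t, F t ^ q) * G y ^ p := by
            intro y
            rw [hg₀]
            simp only
            rw [lintegral_mul_const'' _ ((aem_shiftr hF y).pow_const q)]
            congr 1
            exact lintegral_add_right_eq_self (fun t => F t ^ q) y
          simp_rw [inner]
          exact lintegral_const_mul'' _ (hG.pow_const p)
        have I₁ : ∫⁻ z, g₁ z ∂μ2 = (∫⁻ t, F t ^ q) * (∫⁻ t, H t ^ r) := by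
          rw [hμ2, lintegral_prod _ hg₁m]
          have inner : ∀ x : ℝ, ∫⁻ y, g₁ (x, y) = (∫⁻ t, F t ^ q) * H x ^ r := by
            intro x
            rw [hg₁]
            simp only
            rw [lintegral_mul_const'' _ ((aem_shift hF x).pow_const q)]
            congr 1
            exact lintegral_add_left_eq_self (fun t => F t ^ q) x
          simp_rw [inner]
          exact lintegral_const_mul'' _ (hH.pow_const r)
        have I₂ : ∫⁻ z, g₂ z ∂μ2 = (∫⁻ t, G t ^ p) * (∫⁻ t, H t ^ r) := by
          rw [hμ2, lintegral_prod _ hg₂m]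
          have inner : ∀ x : ℝ, ∫⁻ y, g₂ (x, y) = (∫⁻ t, G t ^ p) * H x ^ r := by
            intro x
            rw [hg₂]
            simp only
            rw [lintegral_mul_const'' _ (hG.pow_const p)]
          simp_rw [inner]
          exact lintegral_const_mul'' _ (hH.pow_const r)
        rw [I₀, I₁, I₂]
    _ = (∫⁻ t, F t ^ q) ^ (1 / q) * (∫⁻ t, G t ^ p) ^ (1 / p) * (∫⁻ t, H t ^ r) ^ (1 / r) := by
        rw [alg_split _ _ _ h₀ h₁ h₂, hq', hp', hr']

end YoungHelpers

theorem stmt1 (p q r : ℝ) (hp : 1 < p) (hq : 1 < q) (hr : 1 < r)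
    (hpqr : 1 / p + 1 / q + 1 / r = 2)
    (f g h : ℝ → ℂ)
    (hg : MemLp g (ENNReal.ofReal p)) (hf : MemLp f (ENNReal.ofReal q))
    (hh : MemLp h (ENNReal.ofReal r)) :
    ‖∫ x : ℝ, HFconv f g x * h x‖ ≤
      Real.sqrt (2 / Real.pi) * (eLpNorm g (ENNReal.ofReal p) volume).toReal *
        (eLpNorm f (ENNReal.ofReal q) volume).toReal *
        (eLpNorm h (ENNReal.ofReal r) volume).toReal := by
  have hp0 : (0:ℝ) < p := by linarith
  have hq0 : (0:ℝ) < q := by linarith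
  have hr0 : (0:ℝ) < r := by linarith
  set F : ℝ → ENNReal := fun t => (‖f t‖₊ : ENNReal) with hFdef
  set G : ℝ → ENNReal := fun t => (‖g t‖₊ : ENNReal) with hGdef
  set H : ℝ → ENNReal := fun t => (‖h t‖₊ : ENNReal) with hHdef
  have hFm : AEMeasurable F volume := AEStronglyMeasurable.enorm hf.aestronglyMeasurable
  have hGm : AEMeasurable G volume := AEStronglyMeasurable.enorm hg.aestronglyMeasurable
  have hHm : AEMeasurable H volume := AEStronglyMeasurable.enorm hh.aestronglyMeasurable
  set μ2 : Measure (ℝ × ℝ) := (volume : Measure ℝ).prod volume with hμ2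
  set A : ENNReal := ∫⁻ t, F t ^ q with hA
  set B : ENNReal := ∫⁻ t, G t ^ p with hB
  set C : ENNReal := ∫⁻ t, H t ^ r with hC
  set N : ENNReal := A ^ (1/q) * B ^ (1/p) * C ^ (1/r) with hN
  -- identify Lp norms
  have hAe : A ^ (1/q) = eLpNorm f (ENNReal.ofReal q) volume := by
    rw [eLpNorm_eq_lintegral_rpow_enorm_toReal (by simp [ENNReal.ofReal_eq_zero]; linarith)
      ENNReal.ofReal_ne_top, ENNReal.toReal_ofReal hq0.le, hA]
    rfl
  have hBe : B ^ (1/p) = eLpNorm g (ENNReal.ofReal p) volume := by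
    rw [eLpNorm_eq_lintegral_rpow_enorm_toReal (by simp [ENNReal.ofReal_eq_zero]; linarith)
      ENNReal.ofReal_ne_top, ENNReal.toReal_ofReal hp0.le, hB]
    rfl
  have hCe : C ^ (1/r) = eLpNorm h (ENNReal.ofReal r) volume := by
    rw [eLpNorm_eq_lintegral_rpow_enorm_toReal (by simp [ENNReal.ofReal_eq_zero]; linarith)
      ENNReal.ofReal_ne_top, ENNReal.toReal_ofReal hr0.le, hC]
    rfl
  have hNfin : N ≠ ⊤ := by
    rw [hN]
    exact ENNReal.mul_ne_top (ENNReal.mul_ne_top (hAe ▸ hf.eLpNorm_ne_top)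
      (hBe ▸ hg.eLpNorm_ne_top)) (hCe ▸ hh.eLpNorm_ne_top)
  -- the constant
  have hsq : (0:ℝ) < Real.sqrt (2 * Real.pi) := Real.sqrt_pos.2 (by positivity)
  have hc : (0:ℝ) ≤ 1 / (2 * Real.sqrt (2 * Real.pi)) := by positivity
  set c' : ENNReal := ENNReal.ofReal (1 / (2 * Real.sqrt (2 * Real.pi))) with hc'
  -- pointwise bound on the convolution
  have hxy : ∀ x : ℝ, AEMeasurable
      (fun y => G y * (F (x + y) + F (x - y) + F (-x - y) + F (-x + y))) volume := by
    intro x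
    refine hGm.mul (((?_ : AEMeasurable _ volume).fun_add ?_).fun_add ?_ |>.fun_add ?_)
    · exact aem_shift hFm x
    · have := (aem_shift hFm x).comp_quasiMeasurePreserving
        (Measure.measurePreserving_neg volume).quasiMeasurePreserving
      simpa [Function.comp_def, sub_eq_add_neg] using this
    · have := (aem_shift hFm (-x)).comp_quasiMeasurePreserving
        (Measure.measurePreserving_neg volume).quasiMeasurePreserving
      simpa [Function.comp_def, sub_eq_add_neg] using this
    · exact aem_shift hFm (-x)
  have hHFx : ∀ x : ℝ, (‖HFconv f g x‖₊ : ENNReal) ≤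
      c' * ∫⁻ y, G y * (F (x + y) + F (x - y) + F (-x - y) + F (-x + y)) := by
    intro x
    have hrep : HFconv f g x = ((1 / (2 * Real.sqrt (2 * Real.pi)) : ℝ) : ℂ) *
        ∫ y : ℝ, g y * (f (x + y) + f (x - y) + Complex.I * f (-x - y)
          - Complex.I * f (-x + y)) := by
      rw [HFconv]
      norm_cast
    rw [hrep, nnnorm_mul, ENNReal.coe_mul]
    have h1 : (‖((1 / (2 * Real.sqrt (2 * Real.pi)) : ℝ) : ℂ)‖₊ : ENNReal) = c' := by
      rw [Complex.nnnorm_real, hc']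
      exact Real.enorm_eq_ofReal hc
    rw [h1]
    refine mul_le_mul_right ?_ c'
    refine (enorm_integral_le_lintegral_enorm _).trans (lintegral_mono fun y => ?_)
    rw [enorm_eq_nnnorm, nnnorm_mul, ENNReal.coe_mul]
    refine mul_le_mul_right ?_ _
    have hn : ‖f (x+y) + f (x-y) + Complex.I * f (-x-y) - Complex.I * f (-x+y)‖₊ ≤
        ‖f (x+y)‖₊ + ‖f (x-y)‖₊ + ‖f (-x-y)‖₊ + ‖f (-x+y)‖₊ := by
      calc ‖f (x+y) + f (x-y) + Complex.I * f (-x-y) - Complex.I * f (-x+y)‖₊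
          ≤ ‖f (x+y) + f (x-y) + Complex.I * f (-x-y)‖₊ + ‖Complex.I * f (-x+y)‖₊ :=
            nnnorm_sub_le _ _
        _ ≤ (‖f (x+y) + f (x-y)‖₊ + ‖Complex.I * f (-x-y)‖₊) + ‖Complex.I * f (-x+y)‖₊ :=
            add_le_add_left (nnnorm_add_le _ _) _
        _ ≤ ((‖f (x+y)‖₊ + ‖f (x-y)‖₊) + ‖Complex.I * f (-x-y)‖₊) + ‖Complex.I * f (-x+y)‖₊ := by
            gcongr
            exact nnnorm_add_le _ _
        _ = ‖f (x+y)‖₊ + ‖f (x-y)‖₊ + ‖f (-x-y)‖₊ + ‖f (-x+y)‖₊ := by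
            rw [nnnorm_mul, nnnorm_mul, Complex.nnnorm_I, one_mul, one_mul]
    rw [hFdef]
    simp only
    calc ((‖f (x+y) + f (x-y) + Complex.I * f (-x-y) - Complex.I * f (-x+y)‖₊ : NNReal) : ENNReal)
        ≤ ((‖f (x+y)‖₊ + ‖f (x-y)‖₊ + ‖f (-x-y)‖₊ + ‖f (-x+y)‖₊ : NNReal) : ENNReal) := by
          exact_mod_cast hn
      _ = (‖f (x+y)‖₊ : ENNReal) + ‖f (x-y)‖₊ + ‖f (-x-y)‖₊ + ‖f (-x+y)‖₊ := by push_cast; ring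
  -- the four product-space terms
  have hFz : AEMeasurable (fun z : ℝ × ℝ => F (z.1 + z.2)) μ2 := aem_add hFm
  have hGz : AEMeasurable (fun z : ℝ × ℝ => G z.2) μ2 := aem_snd hGm
  have hHz : AEMeasurable (fun z : ℝ × ℝ => H z.1) μ2 := aem_fst hHm
  have hFz2 : AEMeasurable (fun z : ℝ × ℝ => F (z.1 - z.2)) μ2 := by
    have := aem_prod_neg_snd hFz
    simpa [sub_eq_add_neg] using this
  have hFz3 : AEMeasurable (fun z : ℝ × ℝ => F (-z.1 - z.2)) μ2 := by
    have := aem_prod_neg_fst (aem_prod_neg_snd hFz)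
    simpa [sub_eq_add_neg] using this
  have hFz4 : AEMeasurable (fun z : ℝ × ℝ => F (-z.1 + z.2)) μ2 := by
    exact aem_prod_neg_fst hFz
  have ht1m : AEMeasurable (fun z : ℝ × ℝ => F (z.1 + z.2) * G z.2 * H z.1) μ2 :=
    (hFz.mul hGz).mul hHz
  have ht2m : AEMeasurable (fun z : ℝ × ℝ => F (z.1 - z.2) * G z.2 * H z.1) μ2 :=
    (hFz2.mul hGz).mul hHz
  have ht3m : AEMeasurable (fun z : ℝ × ℝ => F (-z.1 - z.2) * G z.2 * H z.1) μ2 :=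
    (hFz3.mul hGz).mul hHz
  have ht4m : AEMeasurable (fun z : ℝ × ℝ => F (-z.1 + z.2) * G z.2 * H z.1) μ2 :=
    (hFz4.mul hGz).mul hHz
  -- reflected norms
  have hGneg : ∫⁻ t, G (-t) ^ p = B := by
    rw [hB]
    exact lint_neg (fun t => G t ^ p)
  have hHneg : ∫⁻ t, H (-t) ^ r = C := by
    rw [hC]
    exact lint_neg (fun t => H t ^ r)
  -- bounds for the four terms
  have hT1 : ∫⁻ z, F (z.1 + z.2) * G z.2 * H z.1 ∂μ2 ≤ N := by
    rw [hN, hA, hB, hC]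
    exact young_prod hp hq hr hpqr hFm hGm hHm
  have hT2 : ∫⁻ z, F (z.1 - z.2) * G z.2 * H z.1 ∂μ2 ≤ N := by
    have heq : ∫⁻ z, F (z.1 - z.2) * G z.2 * H z.1 ∂μ2
        = ∫⁻ z, F (z.1 + z.2) * G (-z.2) * H z.1 ∂μ2 := by
      rw [hμ2, ← lint_prod_neg_snd (fun z => F (z.1 + z.2) * G (-z.2) * H z.1)]
      refine lintegral_congr fun z => ?_
      simp [sub_eq_add_neg]
    rw [heq, hN, hA, hC, ← hGneg]
    exact young_prod hp hq hr hpqr hFm (aem_neg hGm) hHm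
  have hT3 : ∫⁻ z, F (-z.1 - z.2) * G z.2 * H z.1 ∂μ2 ≤ N := by
    have heq : ∫⁻ z, F (-z.1 - z.2) * G z.2 * H z.1 ∂μ2
        = ∫⁻ z, F (z.1 + z.2) * G (-z.2) * H (-z.1) ∂μ2 := by
      rw [hμ2]
      calc ∫⁻ z, F (-z.1 - z.2) * G z.2 * H z.1 ∂((volume : Measure ℝ).prod volume)
          = ∫⁻ z, (fun w : ℝ × ℝ => F (w.1 - w.2) * G w.2 * H (-w.1)) (-z.1, z.2)
              ∂((volume : Measure ℝ).prod volume) := lintegral_congr fun z => by simp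
        _ = ∫⁻ w, F (w.1 - w.2) * G w.2 * H (-w.1) ∂((volume : Measure ℝ).prod volume) :=
            lint_prod_neg_fst (fun w : ℝ × ℝ => F (w.1 - w.2) * G w.2 * H (-w.1))
        _ = ∫⁻ z, (fun w : ℝ × ℝ => F (w.1 + w.2) * G (-w.2) * H (-w.1)) (z.1, -z.2)
              ∂((volume : Measure ℝ).prod volume) :=
            lintegral_congr fun z => by simp [sub_eq_add_neg]
        _ = _ := lint_prod_neg_snd (fun w : ℝ × ℝ => F (w.1 + w.2) * G (-w.2) * H (-w.1))
    rw [heq, hN, hA, ← hGneg, ← hHneg]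
    exact young_prod hp hq hr hpqr hFm (aem_neg hGm) (aem_neg hHm)
  have hT4 : ∫⁻ z, F (-z.1 + z.2) * G z.2 * H z.1 ∂μ2 ≤ N := by
    have heq : ∫⁻ z, F (-z.1 + z.2) * G z.2 * H z.1 ∂μ2
        = ∫⁻ z, F (z.1 + z.2) * G z.2 * H (-z.1) ∂μ2 := by
      rw [hμ2, ← lint_prod_neg_fst (fun z => F (z.1 + z.2) * G z.2 * H (-z.1))]
      refine lintegral_congr fun z => ?_
      simp
    rw [heq, hN, hA, hB, ← hHneg]
    exact young_prod hp hq hr hpqr hFm hGm (aem_neg hHm)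
  -- the double-integral bound
  have key2 : ∫⁻ x, (∫⁻ y, G y * (F (x + y) + F (x - y) + F (-x - y) + F (-x + y))) * H x
      ≤ N + (N + (N + N)) := by
    have e1 : ∀ x : ℝ, (∫⁻ y, G y * (F (x + y) + F (x - y) + F (-x - y) + F (-x + y))) * H x
        = ∫⁻ y, G y * (F (x + y) + F (x - y) + F (-x - y) + F (-x + y)) * H x :=
      fun x => (lintegral_mul_const'' _ (hxy x)).symm
    rw [lintegral_congr e1]
    have huncurry : AEMeasurable
        (fun z : ℝ × ℝ => G z.2 * (F (z.1 + z.2) + F (z.1 - z.2) + F (-z.1 - z.2)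
          + F (-z.1 + z.2)) * H z.1) μ2 :=
      (hGz.mul (((hFz.add hFz2).add hFz3).add hFz4)).mul hHz
    have e2 : ∫⁻ x, ∫⁻ y, G y * (F (x + y) + F (x - y) + F (-x - y) + F (-x + y)) * H x
        = ∫⁻ z : ℝ × ℝ, G z.2 * (F (z.1 + z.2) + F (z.1 - z.2) + F (-z.1 - z.2)
          + F (-z.1 + z.2)) * H z.1 ∂μ2 := by
      rw [hμ2]
      exact lintegral_lintegral (by exact huncurry)
    rw [e2]
    have e3 : ∀ z : ℝ × ℝ, G z.2 * (F (z.1 + z.2) + F (z.1 - z.2) + F (-z.1 - z.2)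
          + F (-z.1 + z.2)) * H z.1
        = F (z.1 + z.2) * G z.2 * H z.1 + (F (z.1 - z.2) * G z.2 * H z.1
          + (F (-z.1 - z.2) * G z.2 * H z.1 + F (-z.1 + z.2) * G z.2 * H z.1)) := by
      intro z; ring
    rw [lintegral_congr e3, lintegral_add_left' ht1m, lintegral_add_left' ht2m,
      lintegral_add_left' ht3m]
    exact add_le_add hT1 (add_le_add hT2 (add_le_add hT3 hT4))
  -- put everything together
  have main : ∫⁻ x, (‖HFconv f g x‖₊ : ENNReal) * H x ≤ c' * (N + (N + (N + N))) := by
    calc ∫⁻ x, (‖HFconv f g x‖₊ : ENNReal) * H x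
        ≤ ∫⁻ x, c' * ((∫⁻ y, G y * (F (x + y) + F (x - y) + F (-x - y) + F (-x + y))) * H x) := by
          refine lintegral_mono fun x => ?_
          rw [← mul_assoc]
          exact mul_le_mul_left (hHFx x) _
      _ = c' * ∫⁻ x, (∫⁻ y, G y * (F (x + y) + F (x - y) + F (-x - y) + F (-x + y))) * H x :=
          lintegral_const_mul' _ _ ENNReal.ofReal_ne_top
      _ ≤ c' * (N + (N + (N + N))) := mul_le_mul_right key2 _
  have step1 : ‖∫ x : ℝ, HFconv f g x * h x‖
      ≤ (∫⁻ x, (‖HFconv f g x‖₊ : ENNReal) * H x).toReal := by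
    refine (norm_integral_le_lintegral_norm _).trans_eq ?_
    congr 1
    refine lintegral_congr fun x => ?_
    rw [ofReal_norm, enorm_eq_nnnorm, nnnorm_mul, ENNReal.coe_mul]
  have fin : c' * (N + (N + (N + N))) ≠ ⊤ := by
    refine ENNReal.mul_ne_top ENNReal.ofReal_ne_top ?_
    simp [ENNReal.add_ne_top, hNfin]
  have step2 : (∫⁻ x, (‖HFconv f g x‖₊ : ENNReal) * H x).toReal
      ≤ (c' * (N + (N + (N + N)))).toReal := ENNReal.toReal_mono fin main
  have hconst : (c' * (N + (N + (N + N)))).toReal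
      = Real.sqrt (2 / Real.pi) * (eLpNorm g (ENNReal.ofReal p) volume).toReal *
        (eLpNorm f (ENNReal.ofReal q) volume).toReal *
        (eLpNorm h (ENNReal.ofReal r) volume).toReal := by
    have h4 : N + (N + (N + N)) = 4 * N := by ring
    rw [h4, ENNReal.toReal_mul, ENNReal.toReal_mul, hc', ENNReal.toReal_ofReal hc]
    have hNr : N.toReal = (eLpNorm f (ENNReal.ofReal q) volume).toReal *
        (eLpNorm g (ENNReal.ofReal p) volume).toReal *
        (eLpNorm h (ENNReal.ofReal r) volume).toReal := by
      rw [hN, ENNReal.toReal_mul, ENNReal.toReal_mul, hAe, hBe, hCe]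
    have hsqrt2 : Real.sqrt 2 * Real.sqrt 2 = 2 := Real.mul_self_sqrt (by norm_num)
    have hsplit : Real.sqrt (2 * Real.pi) = Real.sqrt 2 * Real.sqrt Real.pi :=
      Real.sqrt_mul (by norm_num) _
    have hdiv : Real.sqrt (2 / Real.pi) = Real.sqrt 2 / Real.sqrt Real.pi :=
      Real.sqrt_div (by norm_num) _
    have hπ : (0:ℝ) < Real.sqrt Real.pi := Real.sqrt_pos.2 Real.pi_pos
    have h2 : (0:ℝ) < Real.sqrt 2 := Real.sqrt_pos.2 (by norm_num)
    have hcc : 1 / (2 * Real.sqrt (2 * Real.pi)) * (4:ENNReal).toReal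
        = Real.sqrt (2 / Real.pi) := by
      rw [hsplit, hdiv]
      have : ((4:ENNReal).toReal : ℝ) = 4 := by norm_num
      rw [this]
      field_simp
      nlinarith [hsqrt2]
    calc 1 / (2 * Real.sqrt (2 * Real.pi)) * ((4:ENNReal).toReal * N.toReal)
        = (1 / (2 * Real.sqrt (2 * Real.pi)) * (4:ENNReal).toReal) * N.toReal := by ring
      _ = Real.sqrt (2 / Real.pi) * N.toReal := by rw [hcc]
      _ = _ := by rw [hNr]; ring
  calc ‖∫ x : ℝ, HFconv f g x * h x‖
      ≤ (∫⁻ x, (‖HFconv f g x‖₊ : ENNReal) * H x).toReal := step1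
    _ ≤ (c' * (N + (N + (N + N)))).toReal := step2
    _ = _ := hconst
end

section
/- Let p, q, r > 1 be real numbers with 1/p + 1/q = 1 + 1/r. If g ∈ L^p(ℝ) and f ∈ L^q(ℝ), then the Hartley–Fourier generalized convolution f ∗_{H₁,F} g is well-defined, belongs to L^r(ℝ), and satisfies ‖f ∗_{H₁,F} g‖_{L^r(ℝ)} ≤ √(2/π) ‖g‖_{L^p(ℝ)} ‖f‖_{L^q(ℝ)}. -/
open MeasureTheory Real Complex Filter Topology
open scoped ENNReal

lemma young_core {p q r : ℝ} (hp : 1 < p) (hq : 1 < q) (hr : 1 < r)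
    (hpqr : 1 / p + 1 / q = 1 + 1 / r)
    {F G : ℝ → ℝ≥0∞} (hF : Measurable F) (hG : Measurable G) :
    (∫⁻ x, (∫⁻ y, G y * F (x + y)) ^ r) ^ (1 / r) ≤
      (∫⁻ y, G y ^ p) ^ (1 / p) * (∫⁻ t, F t ^ q) ^ (1 / q) := by
  have hp0 : (0:ℝ) < p := lt_trans one_pos hp
  have hq0 : (0:ℝ) < q := lt_trans one_pos hq
  have hr0 : (0:ℝ) < r := lt_trans one_pos hr
  have hr1 : (0:ℝ) < 1 / r := by positivity
  have hp1 : (0:ℝ) < 1 / p := by positivity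
  have hq1 : (0:ℝ) < 1 / q := by positivity
  set a : ℝ := 1 - 1 / q with ha_def
  set b : ℝ := 1 - 1 / p with hb_def
  have ha : 0 ≤ a := by rw [ha_def, sub_nonneg, div_le_one hq0]; exact hq.le
  have hb : 0 ≤ b := by rw [hb_def, sub_nonneg, div_le_one hp0]; exact hp.le
  have h1 : 1 / r + a = 1 / p := by rw [ha_def]; linarith
  have h2 : 1 / r + b = 1 / q := by rw [hb_def]; linarith
  set IG := ∫⁻ y, G y ^ p with hIG_def
  set IF := ∫⁻ t, F t ^ q with hIF_def
  -- trivial cases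
  by_cases hIF0 : IF = 0
  · have hF0 : F =ᵐ[volume] 0 := by
      have := (lintegral_eq_zero_iff (hF.pow_const q)).mp hIF0
      filter_upwards [this] with t ht
      simpa [ENNReal.rpow_eq_zero_iff, hq0, hq0.not_gt] using ht
    have hK : ∀ x : ℝ, (∫⁻ y, G y * F (x + y)) = 0 := by
      intro x
      have hcomp : (fun y => F (x + y)) =ᵐ[volume] 0 :=
        (measurePreserving_add_left volume x).quasiMeasurePreserving.ae_eq_comp hF0
      have : (fun y => G y * F (x + y)) =ᵐ[volume] 0 := by
        filter_upwards [hcomp] with y hy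
        simp [hy]
      rw [lintegral_congr_ae this]; simp
    have : (∫⁻ x, (∫⁻ y, G y * F (x + y)) ^ r) = 0 := by
      simp [hK, ENNReal.zero_rpow_of_pos hr0]
    rw [this, ENNReal.zero_rpow_of_pos hr1]
    exact zero_le
  by_cases hIG0 : IG = 0
  · have hG0 : G =ᵐ[volume] 0 := by
      have := (lintegral_eq_zero_iff (hG.pow_const p)).mp hIG0
      filter_upwards [this] with t ht
      simpa [ENNReal.rpow_eq_zero_iff, hp0, hp0.not_gt] using ht
    have hK : ∀ x : ℝ, (∫⁻ y, G y * F (x + y)) = 0 := by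
      intro x
      have : (fun y => G y * F (x + y)) =ᵐ[volume] 0 := by
        filter_upwards [hG0] with y hy
        simp [hy]
      rw [lintegral_congr_ae this]; simp
    have : (∫⁻ x, (∫⁻ y, G y * F (x + y)) ^ r) = 0 := by
      simp [hK, ENNReal.zero_rpow_of_pos hr0]
    rw [this, ENNReal.zero_rpow_of_pos hr1]
    exact zero_le
  by_cases hIFtop : IF = ⊤
  · have : (IF : ℝ≥0∞) ^ (1/q) = ⊤ := by rw [hIFtop]; exact ENNReal.top_rpow_of_pos hq1
    have hne : IG ^ (1/p) ≠ 0 := by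
      rcases eq_or_ne IG ⊤ with h | h
      · rw [h, ENNReal.top_rpow_of_pos hp1]; exact ENNReal.top_ne_zero
      · exact (ENNReal.rpow_pos (pos_iff_ne_zero.mpr hIG0) h).ne'
    rw [this, ENNReal.mul_top hne]
    exact le_top
  by_cases hIGtop : IG = ⊤
  · have : (IG : ℝ≥0∞) ^ (1/p) = ⊤ := by rw [hIGtop]; exact ENNReal.top_rpow_of_pos hp1
    have hne : IF ^ (1/q) ≠ 0 :=
      (ENNReal.rpow_pos (pos_iff_ne_zero.mpr hIF0) hIFtop).ne'
    rw [this, ENNReal.top_mul hne]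
    exact le_top
  -- main case
  have hsplit : ∀ (s : ℝ) (hs : 0 < s) (c : ℝ) (hc : 0 ≤ c) (hcs : 1/r + c = 1/s)
      (t : ℝ≥0∞), (t ^ s) ^ (1/r) * (t ^ s) ^ c = t := by
    intro s hs c hc hcs t
    rw [← ENNReal.rpow_add_of_nonneg _ _ hr1.le hc, hcs, ← ENNReal.rpow_mul,
      mul_one_div_cancel hs.ne', ENNReal.rpow_one]
  -- pointwise Hölder bound
  have stepA : ∀ x : ℝ, (∫⁻ y, G y * F (x + y)) ≤
      (∫⁻ y, G y ^ p * F (x + y) ^ q) ^ (1/r) * (IG ^ a * IF ^ b) := by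
    intro x
    have hFx : Measurable fun y => F (x + y) := hF.comp (measurable_const_add x)
    have key := ENNReal.lintegral_prod_norm_pow_le (μ := (volume : Measure ℝ))
      (Finset.univ : Finset (Fin 3))
      (f := ![fun y => G y ^ p * F (x + y) ^ q, fun y => G y ^ p, fun y => F (x + y) ^ q])
      (p := ![1/r, a, b])
      (by
        intro i _
        fin_cases i
        · exact ((hG.pow_const p).mul (hFx.pow_const q)).aemeasurable
        · exact (hG.pow_const p).aemeasurable
        · exact (hFx.pow_const q).aemeasurable)
      (by
        have hsum : 1/r + a + b = 1 := by rw [ha_def, hb_def]; linarith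
        simpa [Fin.sum_univ_three] using hsum)
      (by
        intro i _
        fin_cases i
        · exact hr1.le
        · exact ha
        · exact hb)
    simp only [Fin.prod_univ_three, Matrix.cons_val_zero, Matrix.cons_val_one, Matrix.head_cons,
      Matrix.cons_val_two, Matrix.tail_cons] at key
    have hintegrand : ∀ y : ℝ, (G y ^ p * F (x + y) ^ q) ^ (1/r) * (G y ^ p) ^ a *
        (F (x + y) ^ q) ^ b = G y * F (x + y) := by
      intro y
      rw [ENNReal.mul_rpow_of_nonneg _ _ hr1.le]
      calc (G y ^ p) ^ (1/r) * (F (x+y) ^ q) ^ (1/r) * (G y ^ p) ^ a * (F (x+y) ^ q) ^ b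
          = ((G y ^ p) ^ (1/r) * (G y ^ p) ^ a) * ((F (x+y) ^ q) ^ (1/r) * (F (x+y) ^ q) ^ b) := by
            ring
        _ = G y * F (x + y) := by
            rw [hsplit p hp0 a ha h1, hsplit q hq0 b hb h2]
    calc (∫⁻ y, G y * F (x + y))
        = ∫⁻ y, (G y ^ p * F (x + y) ^ q) ^ (1/r) * (G y ^ p) ^ a * (F (x + y) ^ q) ^ b := by
          exact lintegral_congr fun y => (hintegrand y).symm
      _ ≤ (∫⁻ y, G y ^ p * F (x + y) ^ q) ^ (1/r) * (∫⁻ y, G y ^ p) ^ a *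
            (∫⁻ y, F (x + y) ^ q) ^ b := key
      _ = (∫⁻ y, G y ^ p * F (x + y) ^ q) ^ (1/r) * (IG ^ a * IF ^ b) := by
          rw [lintegral_add_left_eq_self (fun t => F t ^ q) x, ← hIG_def, ← hIF_def, mul_assoc]
  -- finiteness of the constant
  set C : ℝ≥0∞ := IG ^ a * IF ^ b with hC_def
  have hCtop : C ≠ ⊤ :=
    ENNReal.mul_ne_top (ENNReal.rpow_ne_top_of_nonneg ha hIGtop)
      (ENNReal.rpow_ne_top_of_nonneg hb hIFtop)
  -- integrate the r-th power
  have stepB : (∫⁻ x, (∫⁻ y, G y * F (x + y)) ^ r) ≤ IG * IF * C ^ r := by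
    calc (∫⁻ x, (∫⁻ y, G y * F (x + y)) ^ r)
        ≤ ∫⁻ x, (∫⁻ y, G y ^ p * F (x + y) ^ q) * C ^ r := by
          refine lintegral_mono fun x => ?_
          calc (∫⁻ y, G y * F (x + y)) ^ r
              ≤ ((∫⁻ y, G y ^ p * F (x + y) ^ q) ^ (1/r) * C) ^ r :=
                ENNReal.rpow_le_rpow (stepA x) hr0.le
            _ = (∫⁻ y, G y ^ p * F (x + y) ^ q) * C ^ r := by
                rw [ENNReal.mul_rpow_of_nonneg _ _ hr0.le, ← ENNReal.rpow_mul,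
                  one_div_mul_cancel hr0.ne', ENNReal.rpow_one]
      _ = (∫⁻ x, ∫⁻ y, G y ^ p * F (x + y) ^ q) * C ^ r := by
          exact lintegral_mul_const' _ _ (ENNReal.rpow_ne_top_of_nonneg hr0.le hCtop)
      _ = IG * IF * C ^ r := by
          congr 1
          have hmeas : AEMeasurable (Function.uncurry fun x y => G y ^ p * F (x + y) ^ q)
              ((volume : Measure ℝ).prod volume) := by
            apply Measurable.aemeasurable
            apply Measurable.mul
            · exact (hG.comp measurable_snd).pow_const p
            · exact (hF.comp measurable_add).pow_const q
          rw [lintegral_lintegral_swap hmeas]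
          calc (∫⁻ y, ∫⁻ x, G y ^ p * F (x + y) ^ q)
              = ∫⁻ y, G y ^ p * ∫⁻ x, F (x + y) ^ q := by
                refine lintegral_congr fun y => ?_
                exact lintegral_const_mul _ ((hF.comp (measurable_add_const y)).pow_const q)
            _ = ∫⁻ y, G y ^ p * IF := by
                refine lintegral_congr fun y => ?_
                rw [lintegral_add_right_eq_self (fun t => F t ^ q) y]
            _ = IG * IF := lintegral_mul_const' _ _ hIFtop
  calc (∫⁻ x, (∫⁻ y, G y * F (x + y)) ^ r) ^ (1/r)
      ≤ (IG * IF * C ^ r) ^ (1/r) := ENNReal.rpow_le_rpow stepB hr1.le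
    _ = IG ^ (1/r) * IF ^ (1/r) * C := by
        rw [ENNReal.mul_rpow_of_nonneg _ _ hr1.le, ENNReal.mul_rpow_of_nonneg _ _ hr1.le,
          ← ENNReal.rpow_mul, mul_one_div_cancel hr0.ne', ENNReal.rpow_one]
    _ = IG ^ (1/p) * IF ^ (1/q) := by
        rw [hC_def]
        calc IG ^ (1/r) * IF ^ (1/r) * (IG ^ a * IF ^ b)
            = (IG ^ (1/r) * IG ^ a) * (IF ^ (1/r) * IF ^ b) := by ring
          _ = IG ^ (1/p) * IF ^ (1/q) := by
              rw [← ENNReal.rpow_add_of_nonneg _ _ hr1.le ha, h1,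
                ← ENNReal.rpow_add_of_nonneg _ _ hr1.le hb, h2]

lemma young_four {p q r : ℝ} (hp : 1 < p) (hq : 1 < q) (hr : 1 < r)
    (hpqr : 1 / p + 1 / q = 1 + 1 / r)
    {F G : ℝ → ℝ≥0∞} (hF : Measurable F) (hG : Measurable G) :
    (∫⁻ x, (∫⁻ y, G y * (F (x + y) + F (x - y) + F (-x - y) + F (-x + y))) ^ r) ^ (1 / r) ≤
      4 * ((∫⁻ y, G y ^ p) ^ (1 / p) * (∫⁻ t, F t ^ q) ^ (1 / q)) := by
  have hr0 : (0:ℝ) < r := lt_trans one_pos hr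
  set F' : ℝ → ℝ≥0∞ := fun t => F (-t) with hF'_def
  have hF' : Measurable F' := hF.comp measurable_neg
  have hF'q : (∫⁻ t, F' t ^ q) = ∫⁻ t, F t ^ q :=
    (Measure.measurePreserving_neg (volume : Measure ℝ)).lintegral_comp (hF.pow_const q)
  set k1 : ℝ → ℝ≥0∞ := fun x => ∫⁻ y, G y * F (x + y) with hk1_def
  set k2 : ℝ → ℝ≥0∞ := fun x => ∫⁻ y, G y * F' (x + y) with hk2_def
  have hk1 : Measurable k1 :=
    Measurable.lintegral_prod_right ((hG.comp measurable_snd).mul (hF.comp measurable_add))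
  have hk2 : Measurable k2 :=
    Measurable.lintegral_prod_right ((hG.comp measurable_snd).mul (hF'.comp measurable_add))
  set B : ℝ≥0∞ := (∫⁻ y, G y ^ p) ^ (1 / p) * (∫⁻ t, F t ^ q) ^ (1 / q) with hB_def
  -- pointwise decomposition
  have hS : ∀ x : ℝ, (∫⁻ y, G y * (F (x + y) + F (x - y) + F (-x - y) + F (-x + y))) =
      k1 x + k2 (-x) + k2 x + k1 (-x) := by
    intro x
    have e2 : ∀ y : ℝ, F (x - y) = F' (-x + y) := by
      intro y; simp only [hF'_def]; rw [show -(-x + y) = x - y by ring]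
    have e3 : ∀ y : ℝ, F (-x - y) = F' (x + y) := by
      intro y; simp only [hF'_def]; rw [show -(x + y) = -x - y by ring]
    have hm1 : Measurable fun y => G y * F (x + y) :=
      hG.mul (hF.comp (measurable_const_add x))
    have hm2 : Measurable fun y => G y * F' (-x + y) :=
      hG.mul (hF'.comp (measurable_const_add (-x)))
    have hm3 : Measurable fun y => G y * F' (x + y) :=
      hG.mul (hF'.comp (measurable_const_add x))
    have hm4 : Measurable fun y => G y * F (-x + y) :=
      hG.mul (hF.comp (measurable_const_add (-x)))
    calc (∫⁻ y, G y * (F (x + y) + F (x - y) + F (-x - y) + F (-x + y)))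
        = ∫⁻ y, (G y * F (x + y) + G y * F' (-x + y) + G y * F' (x + y)) +
            G y * F (-x + y) := by
          refine lintegral_congr fun y => ?_
          rw [e2 y, e3 y]; ring
      _ = k1 x + k2 (-x) + k2 x + k1 (-x) := by
          rw [lintegral_add_right _ hm4, lintegral_add_right _ hm3, lintegral_add_right _ hm2]
  -- neg invariance
  have hneg1 : (∫⁻ x, k1 (-x) ^ r) = ∫⁻ x, k1 x ^ r :=
    (Measure.measurePreserving_neg (volume : Measure ℝ)).lintegral_comp (hk1.pow_const r)
  have hneg2 : (∫⁻ x, k2 (-x) ^ r) = ∫⁻ x, k2 x ^ r :=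
    (Measure.measurePreserving_neg (volume : Measure ℝ)).lintegral_comp (hk2.pow_const r)
  have hb1 : (∫⁻ x, k1 x ^ r) ^ (1/r) ≤ B := young_core hp hq hr hpqr hF hG
  have hb2 : (∫⁻ x, k2 x ^ r) ^ (1/r) ≤ B := by
    have := young_core hp hq hr hpqr hF' hG
    rwa [hF'q] at this
  -- Minkowski
  have hu2 : AEMeasurable (fun x => k2 (-x)) (volume : Measure ℝ) :=
    (hk2.comp measurable_neg).aemeasurable
  have hu4 : AEMeasurable (fun x => k1 (-x)) (volume : Measure ℝ) :=
    (hk1.comp measurable_neg).aemeasurable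
  have step1 : (∫⁻ x, (∫⁻ y, G y * (F (x + y) + F (x - y) + F (-x - y) + F (-x + y))) ^ r) ^ (1/r)
      = (∫⁻ x, ((k1 + fun x => k2 (-x)) + k2 + fun x => k1 (-x)) x ^ r) ^ (1/r) := by
    congr 1
    refine lintegral_congr fun x => ?_
    rw [hS x]; rfl
  rw [step1]
  have m12 : AEMeasurable (k1 + fun x => k2 (-x)) (volume : Measure ℝ) :=
    hk1.aemeasurable.add hu2
  have m123 : AEMeasurable ((k1 + fun x => k2 (-x)) + k2) (volume : Measure ℝ) :=
    m12.add hk2.aemeasurable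
  calc (∫⁻ x, ((k1 + fun x => k2 (-x)) + k2 + fun x => k1 (-x)) x ^ r) ^ (1/r)
      ≤ (∫⁻ x, ((k1 + fun x => k2 (-x)) + k2) x ^ r) ^ (1/r) +
          (∫⁻ x, k1 (-x) ^ r) ^ (1/r) :=
        ENNReal.lintegral_Lp_add_le m123 hu4 hr.le
    _ ≤ ((∫⁻ x, (k1 + fun x => k2 (-x)) x ^ r) ^ (1/r) + (∫⁻ x, k2 x ^ r) ^ (1/r)) +
          (∫⁻ x, k1 (-x) ^ r) ^ (1/r) := by
        gcongr
        exact ENNReal.lintegral_Lp_add_le m12 hk2.aemeasurable hr.le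
    _ ≤ (((∫⁻ x, k1 x ^ r) ^ (1/r) + (∫⁻ x, k2 (-x) ^ r) ^ (1/r)) + (∫⁻ x, k2 x ^ r) ^ (1/r)) +
          (∫⁻ x, k1 (-x) ^ r) ^ (1/r) := by
        gcongr
        exact ENNReal.lintegral_Lp_add_le hk1.aemeasurable hu2 hr.le
    _ ≤ ((B + B) + B) + B := by
        rw [hneg1, hneg2]
        gcongr
    _ = 4 * B := by ring

theorem stmt2 (p q r : ℝ) (hp : 1 < p) (hq : 1 < q) (hr : 1 < r)
    (hpqr : 1 / p + 1 / q = 1 + 1 / r)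
    (f g : ℝ → ℂ)
    (hg : MemLp g (ENNReal.ofReal p)) (hf : MemLp f (ENNReal.ofReal q)) :
    MemLp (HFconv f g) (ENNReal.ofReal r) ∧
      eLpNorm (HFconv f g) (ENNReal.ofReal r) volume ≤
        ENNReal.ofReal (Real.sqrt (2 / Real.pi)) *
          eLpNorm g (ENNReal.ofReal p) volume * eLpNorm f (ENNReal.ofReal q) volume := by
  have hp0 : (0:ℝ) < p := lt_trans one_pos hp
  have hq0 : (0:ℝ) < q := lt_trans one_pos hq
  have hr0 : (0:ℝ) < r := lt_trans one_pos hr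
  have hπ := Real.pi_pos
  have hsq : (0:ℝ) < Real.sqrt (2 * Real.pi) := Real.sqrt_pos.mpr (by positivity)
  obtain ⟨f₀, hf₀sm, hff₀⟩ := hf.1
  obtain ⟨g₀, hg₀sm, hgg₀⟩ := hg.1
  have hf₀m : Measurable f₀ := hf₀sm.measurable
  have hg₀m : Measurable g₀ := hg₀sm.measurable
  -- transfer of a.e. equality along affine maps
  have haeadd : ∀ c : ℝ, ∀ᵐ y : ℝ, f (c + y) = f₀ (c + y) := by
    intro c
    have h := (measurePreserving_add_left (volume : Measure ℝ)
      c).quasiMeasurePreserving.ae_eq_comp hff₀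
    filter_upwards [h] with y hy
    simpa [Function.comp] using hy
  have haesub : ∀ c : ℝ, ∀ᵐ y : ℝ, f (c - y) = f₀ (c - y) := by
    intro c
    have h := ((measurePreserving_add_left (volume : Measure ℝ) c).comp
      (Measure.measurePreserving_neg volume)).quasiMeasurePreserving.ae_eq_comp hff₀
    filter_upwards [h] with y hy
    simpa [Function.comp, ← sub_eq_add_neg] using hy
  have hconv : HFconv f g = HFconv f₀ g₀ := by
    funext x
    unfold HFconv
    congr 1
    refine integral_congr_ae ?_
    filter_upwards [hgg₀, haeadd x, haesub x, haesub (-x), haeadd (-x)]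
      with y h0 h1 h2 h3 h4
    rw [h0, h1, h2, h3, h4]
  -- the nnnorm functions
  set F : ℝ → ℝ≥0∞ := fun t => (‖f₀ t‖₊ : ℝ≥0∞) with hF_def
  set G : ℝ → ℝ≥0∞ := fun t => (‖g₀ t‖₊ : ℝ≥0∞) with hG_def
  have hFm : Measurable F := hf₀m.enorm
  have hGm : Measurable G := hg₀m.enorm
  set S : ℝ → ℝ≥0∞ :=
    fun x => ∫⁻ y, G y * (F (x + y) + F (x - y) + F (-x - y) + F (-x + y)) with hS_def
  -- strong measurability
  have hΦ : StronglyMeasurable fun z : ℝ × ℝ => g₀ z.2 *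
      (f₀ (z.1 + z.2) + f₀ (z.1 - z.2) + Complex.I * f₀ (-z.1 - z.2) -
        Complex.I * f₀ (-z.1 + z.2)) := by
    apply Measurable.stronglyMeasurable
    apply (hg₀m.comp measurable_snd).mul
    apply Measurable.sub
    · apply Measurable.add
      · exact (hf₀m.comp (measurable_fst.add measurable_snd)).add
          (hf₀m.comp (measurable_fst.sub measurable_snd))
      · exact measurable_const.mul (hf₀m.comp (measurable_fst.neg.sub measurable_snd))
    · exact measurable_const.mul (hf₀m.comp (measurable_fst.neg.add measurable_snd))
  have hsm : AEStronglyMeasurable (HFconv f g) (volume : Measure ℝ) := by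
    rw [hconv]
    exact ((hΦ.integral_prod_right').const_mul _).aestronglyMeasurable
  -- constant
  have hcpos : (0:ℝ) ≤ 1 / (2 * Real.sqrt (2 * Real.pi)) := by positivity
  set c' : ℝ≥0∞ := ENNReal.ofReal (1 / (2 * Real.sqrt (2 * Real.pi))) with hc'_def
  have hc'top : c' ≠ ⊤ := ENNReal.ofReal_ne_top
  -- pointwise bound
  have hpt : ∀ x : ℝ, (‖HFconv f₀ g₀ x‖₊ : ℝ≥0∞) ≤ c' * S x := by
    intro x
    have hcc : ((1 / (2 * (Real.sqrt (2 * Real.pi) : ℂ))) : ℂ) =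
        ((1 / (2 * Real.sqrt (2 * Real.pi)) : ℝ) : ℂ) := by push_cast; ring
    calc (‖HFconv f₀ g₀ x‖₊ : ℝ≥0∞)
        = (‖((1 / (2 * Real.sqrt (2 * Real.pi)) : ℝ) : ℂ)‖₊ : ℝ≥0∞) *
            ‖∫ y : ℝ, g₀ y * (f₀ (x + y) + f₀ (x - y) + Complex.I * f₀ (-x - y) -
              Complex.I * f₀ (-x + y))‖₊ := by
          rw [HFconv, hcc, nnnorm_mul, ENNReal.coe_mul]
      _ = c' * ‖∫ y : ℝ, g₀ y * (f₀ (x + y) + f₀ (x - y) + Complex.I * f₀ (-x - y) -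
              Complex.I * f₀ (-x + y))‖₊ := by
          rw [Complex.nnnorm_real, ← enorm_eq_nnnorm, Real.enorm_eq_ofReal hcpos, hc'_def]
      _ ≤ c' * ∫⁻ y, (‖g₀ y * (f₀ (x + y) + f₀ (x - y) + Complex.I * f₀ (-x - y) -
              Complex.I * f₀ (-x + y))‖₊ : ℝ≥0∞) :=
          mul_le_mul_right (enorm_integral_le_lintegral_enorm _) _
      _ ≤ c' * S x := by
          refine mul_le_mul_right (lintegral_mono fun y => ?_) _
          rw [nnnorm_mul, ENNReal.coe_mul]
          refine mul_le_mul_right ?_ _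
          have key : ‖f₀ (x + y) + f₀ (x - y) + Complex.I * f₀ (-x - y) -
              Complex.I * f₀ (-x + y)‖₊ ≤
              ‖f₀ (x + y)‖₊ + ‖f₀ (x - y)‖₊ + ‖f₀ (-x - y)‖₊ + ‖f₀ (-x + y)‖₊ := by
            calc ‖f₀ (x + y) + f₀ (x - y) + Complex.I * f₀ (-x - y) -
                Complex.I * f₀ (-x + y)‖₊
                ≤ ‖f₀ (x + y) + f₀ (x - y) + Complex.I * f₀ (-x - y)‖₊ +
                    ‖Complex.I * f₀ (-x + y)‖₊ := nnnorm_sub_le _ _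
              _ ≤ (‖f₀ (x + y) + f₀ (x - y)‖₊ + ‖Complex.I * f₀ (-x - y)‖₊) +
                    ‖Complex.I * f₀ (-x + y)‖₊ := by
                  exact add_le_add_left (nnnorm_add_le _ _) _
              _ ≤ ((‖f₀ (x + y)‖₊ + ‖f₀ (x - y)‖₊) + ‖Complex.I * f₀ (-x - y)‖₊) +
                    ‖Complex.I * f₀ (-x + y)‖₊ := by
                  exact add_le_add_left (add_le_add_left (nnnorm_add_le _ _) _) _
              _ = ‖f₀ (x + y)‖₊ + ‖f₀ (x - y)‖₊ + ‖f₀ (-x - y)‖₊ + ‖f₀ (-x + y)‖₊ := by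
                  rw [nnnorm_mul, Complex.nnnorm_I, one_mul, nnnorm_mul, Complex.nnnorm_I,
                    one_mul]
          calc (‖f₀ (x + y) + f₀ (x - y) + Complex.I * f₀ (-x - y) -
              Complex.I * f₀ (-x + y)‖₊ : ℝ≥0∞)
              ≤ ↑(‖f₀ (x + y)‖₊ + ‖f₀ (x - y)‖₊ + ‖f₀ (-x - y)‖₊ + ‖f₀ (-x + y)‖₊) :=
                ENNReal.coe_le_coe.mpr key
            _ = F (x + y) + F (x - y) + F (-x - y) + F (-x + y) := by
                push_cast; rfl
  -- eLpNorm identities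
  have hrE : (ENNReal.ofReal r) ≠ 0 := (ENNReal.ofReal_pos.mpr hr0).ne'
  have hpE : (ENNReal.ofReal p) ≠ 0 := (ENNReal.ofReal_pos.mpr hp0).ne'
  have hqE : (ENNReal.ofReal q) ≠ 0 := (ENNReal.ofReal_pos.mpr hq0).ne'
  have eg : eLpNorm g (ENNReal.ofReal p) volume = (∫⁻ y, G y ^ p) ^ (1 / p) := by
    rw [eLpNorm_congr_ae hgg₀, eLpNorm_eq_lintegral_rpow_enorm_toReal hpE ENNReal.ofReal_ne_top,
      ENNReal.toReal_ofReal hp0.le]; rfl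
  have ef : eLpNorm f (ENNReal.ofReal q) volume = (∫⁻ t, F t ^ q) ^ (1 / q) := by
    rw [eLpNorm_congr_ae hff₀, eLpNorm_eq_lintegral_rpow_enorm_toReal hqE ENNReal.ofReal_ne_top,
      ENNReal.toReal_ofReal hq0.le]; rfl
  -- main estimate
  have hmain : eLpNorm (HFconv f g) (ENNReal.ofReal r) volume ≤
      c' * (4 * ((∫⁻ y, G y ^ p) ^ (1 / p) * (∫⁻ t, F t ^ q) ^ (1 / q))) := by
    rw [hconv, eLpNorm_eq_lintegral_rpow_enorm_toReal hrE ENNReal.ofReal_ne_top,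
      ENNReal.toReal_ofReal hr0.le]
    calc (∫⁻ x, (‖HFconv f₀ g₀ x‖₊ : ℝ≥0∞) ^ r) ^ (1 / r)
        ≤ (∫⁻ x, (c' * S x) ^ r) ^ (1 / r) := by
          refine ENNReal.rpow_le_rpow (lintegral_mono fun x => ?_) (by positivity)
          exact ENNReal.rpow_le_rpow (hpt x) hr0.le
      _ = (c' ^ r * ∫⁻ x, S x ^ r) ^ (1 / r) := by
          congr 1
          simp_rw [ENNReal.mul_rpow_of_nonneg _ _ hr0.le]
          exact lintegral_const_mul' _ _ (ENNReal.rpow_ne_top_of_nonneg hr0.le hc'top)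
      _ = c' * (∫⁻ x, S x ^ r) ^ (1 / r) := by
          rw [ENNReal.mul_rpow_of_nonneg _ _ (by positivity : (0:ℝ) ≤ 1 / r),
            ← ENNReal.rpow_mul, mul_one_div_cancel hr0.ne', ENNReal.rpow_one]
      _ ≤ c' * (4 * ((∫⁻ y, G y ^ p) ^ (1 / p) * (∫⁻ t, F t ^ q) ^ (1 / q))) :=
          mul_le_mul_right (young_four hp hq hr hpqr hFm hGm) _
  -- the constant
  have hconstreal : 1 / (2 * Real.sqrt (2 * Real.pi)) * 4 = Real.sqrt (2 / Real.pi) := by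
    have h2 : Real.sqrt (2 / Real.pi) * Real.sqrt (2 * Real.pi) = 2 := by
      rw [← Real.sqrt_mul (by positivity), show (2 / Real.pi) * (2 * Real.pi) = 4 by
        field_simp; ring, show (4:ℝ) = 2 ^ 2 by norm_num, Real.sqrt_sq (by norm_num)]
    have h3 : Real.sqrt (2 / Real.pi) = 2 / Real.sqrt (2 * Real.pi) := by
      rw [eq_div_iff hsq.ne']; exact h2
    rw [h3]
    field_simp
    ring
  have hconstE : c' * 4 = ENNReal.ofReal (Real.sqrt (2 / Real.pi)) := by
    rw [hc'_def, show (4:ℝ≥0∞) = ENNReal.ofReal 4 from (ENNReal.ofReal_ofNat 4).symm,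
      ← ENNReal.ofReal_mul hcpos, hconstreal]
  have hbound : eLpNorm (HFconv f g) (ENNReal.ofReal r) volume ≤
      ENNReal.ofReal (Real.sqrt (2 / Real.pi)) *
        eLpNorm g (ENNReal.ofReal p) volume * eLpNorm f (ENNReal.ofReal q) volume := by
    refine hmain.trans_eq ?_
    rw [eg, ef, ← hconstE]
    ring
  refine ⟨⟨hsm, ?_⟩, hbound⟩
  refine lt_of_le_of_lt hbound ?_
  exact ENNReal.mul_lt_top
    (ENNReal.mul_lt_top (ENNReal.ofReal_lt_top) hg.2) hf.2
end

section
/- Let p, q > 1 with 1/p + 1/q = 1. If g ∈ L^p(ℝ) and f ∈ L^q(ℝ), then the Hartley–Fourier generalized convolution (f ∗_{H₁,F} g)(x) is defined and bounded for every x ∈ ℝ, with sup_{x∈ℝ} |(f ∗_{H₁,F} g)(x)| ≤ √(2/π) ‖g‖_{L^p(ℝ)} ‖f‖_{L^q(ℝ)}. -/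
open MeasureTheory Real Complex Filter Topology

theorem stmt3 (p q : ℝ) (hp : 1 < p) (hq : 1 < q) (hpq : 1 / p + 1 / q = 1)
    (f g : ℝ → ℂ)
    (hg : MemLp g (ENNReal.ofReal p)) (hf : MemLp f (ENNReal.ofReal q)) :
    (∀ x : ℝ, Integrable (fun y : ℝ =>
        g y * (f (x + y) + f (x - y) + Complex.I * f (-x - y) - Complex.I * f (-x + y)))) ∧
      ∀ x : ℝ, ‖HFconv f g x‖ ≤
        Real.sqrt (2 / Real.pi) * (eLpNorm g (ENNReal.ofReal p) volume).toReal *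
          (eLpNorm f (ENNReal.ofReal q) volume).toReal := by
  have hp0 : (0:ℝ) < p := lt_trans one_pos hp
  have hq0 : (0:ℝ) < q := lt_trans one_pos hq
  set P := ENNReal.ofReal p with hP
  set Q := ENNReal.ofReal q with hQ
  have hpq' : (1:ENNReal) / 1 = 1 / P + 1 / Q := by
    simp only [one_div, inv_one]
    rw [← ENNReal.ofReal_inv_of_pos hp0,
      ← ENNReal.ofReal_inv_of_pos hq0, ← ENNReal.ofReal_add (by positivity) (by positivity)]
    rw [one_div, one_div] at hpq
    rw [hpq, ENNReal.ofReal_one]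
  -- the four translated/reflected copies of f
  have hm1 : ∀ x : ℝ, MemLp (fun y => f (x + y)) Q volume := fun x =>
    hf.comp_measurePreserving (measurePreserving_add_left volume x)
  have hm2 : ∀ x : ℝ, MemLp (fun y => f (x - y)) Q volume := fun x =>
    hf.comp_measurePreserving (Measure.measurePreserving_sub_left volume x)
  have hm3 : ∀ x : ℝ, MemLp (fun y => Complex.I * f (-x - y)) Q volume := fun x =>
    (hf.comp_measurePreserving (Measure.measurePreserving_sub_left volume (-x))).const_mul Complex.I
  have hm4 : ∀ x : ℝ, MemLp (fun y => Complex.I * f (-x + y)) Q volume := fun x =>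
    (hf.comp_measurePreserving (measurePreserving_add_left volume (-x))).const_mul Complex.I
  have hmh : ∀ x : ℝ, MemLp (fun y =>
      f (x + y) + f (x - y) + Complex.I * f (-x - y) - Complex.I * f (-x + y)) Q volume :=
    fun x => (((hm1 x).add (hm2 x)).add (hm3 x)).sub (hm4 x)
  have hmem1 : ∀ x : ℝ, MemLp (fun y : ℝ =>
      g y * (f (x + y) + f (x - y) + Complex.I * f (-x - y) - Complex.I * f (-x + y)))
      1 volume := fun x => (hmh x).smul hg (hpqr := ⟨by simpa [one_div] using hpq'.symm⟩)
  have hint : ∀ x : ℝ, Integrable (fun y : ℝ =>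
      g y * (f (x + y) + f (x - y) + Complex.I * f (-x - y) - Complex.I * f (-x + y))) :=
    fun x => memLp_one_iff_integrable.mp (hmem1 x)
  refine ⟨hint, fun x => ?_⟩
  have h1Q : (1:ENNReal) ≤ Q := by
    rw [hQ, ← ENNReal.ofReal_one]
    exact ENNReal.ofReal_le_ofReal hq.le
  -- eLpNorm bound for the sum
  have hnorm1 : eLpNorm (fun y => f (x + y)) Q volume = eLpNorm f Q volume :=
    eLpNorm_comp_measurePreserving hf.1 (measurePreserving_add_left volume x)
  have hnorm2 : eLpNorm (fun y => f (x - y)) Q volume = eLpNorm f Q volume :=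
    eLpNorm_comp_measurePreserving hf.1 (Measure.measurePreserving_sub_left volume x)
  have hnorm3 : eLpNorm (fun y => Complex.I * f (-x - y)) Q volume = eLpNorm f Q volume := by
    have h3 : eLpNorm (fun y : ℝ => f (-x - y)) Q volume = eLpNorm f Q volume :=
      eLpNorm_comp_measurePreserving hf.1 (Measure.measurePreserving_sub_left volume (-x))
    have : (fun y : ℝ => Complex.I * f (-x - y)) = Complex.I • (fun y : ℝ => f (-x - y)) := rfl
    rw [this, eLpNorm_const_smul, h3]
    simp [enorm_eq_nnnorm, Complex.nnnorm_I]
  have hnorm4 : eLpNorm (fun y => Complex.I * f (-x + y)) Q volume = eLpNorm f Q volume := by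
    have h4 : eLpNorm (fun y : ℝ => f (-x + y)) Q volume = eLpNorm f Q volume :=
      eLpNorm_comp_measurePreserving hf.1 (measurePreserving_add_left volume (-x))
    have : (fun y : ℝ => Complex.I * f (-x + y)) = Complex.I • (fun y : ℝ => f (-x + y)) := rfl
    rw [this, eLpNorm_const_smul, h4]
    simp [enorm_eq_nnnorm, Complex.nnnorm_I]
  have hsum : eLpNorm (fun y =>
      f (x + y) + f (x - y) + Complex.I * f (-x - y) - Complex.I * f (-x + y)) Q volume
      ≤ 4 * eLpNorm f Q volume := by
    calc eLpNorm (fun y =>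
        f (x + y) + f (x - y) + Complex.I * f (-x - y) - Complex.I * f (-x + y)) Q volume
        ≤ eLpNorm (fun y => f (x + y) + f (x - y) + Complex.I * f (-x - y)) Q volume
          + eLpNorm (fun y => Complex.I * f (-x + y)) Q volume :=
          eLpNorm_sub_le (((hm1 x).add (hm2 x)).add (hm3 x)).1 (hm4 x).1 h1Q
      _ ≤ (eLpNorm (fun y => f (x + y) + f (x - y)) Q volume
          + eLpNorm (fun y => Complex.I * f (-x - y)) Q volume)
          + eLpNorm (fun y => Complex.I * f (-x + y)) Q volume := by
          gcongr
          exact eLpNorm_add_le ((hm1 x).add (hm2 x)).1 (hm3 x).1 h1Q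
      _ ≤ ((eLpNorm (fun y => f (x + y)) Q volume + eLpNorm (fun y => f (x - y)) Q volume)
          + eLpNorm (fun y => Complex.I * f (-x - y)) Q volume)
          + eLpNorm (fun y => Complex.I * f (-x + y)) Q volume := by
          gcongr
          exact eLpNorm_add_le (hm1 x).1 (hm2 x).1 h1Q
      _ = 4 * eLpNorm f Q volume := by
          rw [hnorm1, hnorm2, hnorm3, hnorm4]; ring
  have hholder : eLpNorm (fun y : ℝ =>
      g y * (f (x + y) + f (x - y) + Complex.I * f (-x - y) - Complex.I * f (-x + y)))
      1 volume ≤ eLpNorm g P volume * (4 * eLpNorm f Q volume) := by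
    have hs : eLpNorm (g • (fun y : ℝ =>
        f (x + y) + f (x - y) + Complex.I * f (-x - y) - Complex.I * f (-x + y))) 1 volume
        ≤ eLpNorm g P volume * eLpNorm (fun y : ℝ =>
        f (x + y) + f (x - y) + Complex.I * f (-x - y) - Complex.I * f (-x + y)) Q volume :=
      eLpNorm_smul_le_mul_eLpNorm (hmh x).1 hg.1 (hpqr := ⟨by simpa [one_div] using hpq'.symm⟩)
    exact le_trans hs (mul_le_mul_right hsum _)
  -- pass to real numbers
  have hfin : eLpNorm g P volume * (4 * eLpNorm f Q volume) ≠ ⊤ :=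
    ENNReal.mul_ne_top hg.eLpNorm_ne_top
      (ENNReal.mul_ne_top (by norm_num) hf.eLpNorm_ne_top)
  have hreal : ∫ y : ℝ, ‖g y * (f (x + y) + f (x - y) + Complex.I * f (-x - y)
      - Complex.I * f (-x + y))‖ ≤
      (eLpNorm g P volume).toReal * (4 * (eLpNorm f Q volume).toReal) := by
    rw [integral_norm_eq_lintegral_enorm (hint x).1]
    have := ENNReal.toReal_mono hfin hholder
    rw [eLpNorm_one_eq_lintegral_enorm] at this
    rwa [ENNReal.toReal_mul, ENNReal.toReal_mul, ENNReal.toReal_ofNat] at this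
  have hkey : ‖∫ y : ℝ, g y * (f (x + y) + f (x - y) + Complex.I * f (-x - y)
      - Complex.I * f (-x + y))‖ ≤
      (eLpNorm g P volume).toReal * (4 * (eLpNorm f Q volume).toReal) :=
    le_trans (norm_integral_le_integral_norm _) hreal
  have hcpos : (0:ℝ) < Real.sqrt (2 * Real.pi) := Real.sqrt_pos.mpr (by positivity)
  have hc : 2 / Real.sqrt (2 * Real.pi) = Real.sqrt (2 / Real.pi) := by
    rw [div_eq_iff (ne_of_gt hcpos), ← Real.sqrt_mul (by positivity)]
    have h4 : 2 / Real.pi * (2 * Real.pi) = 2 ^ 2 := by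
      field_simp
    rw [h4, Real.sqrt_sq (by norm_num)]
  rw [HFconv, norm_mul]
  have hnc : ‖(1 : ℂ) / (2 * (Real.sqrt (2 * Real.pi) : ℂ))‖
      = 1 / (2 * Real.sqrt (2 * Real.pi)) := by
    rw [norm_div, norm_mul, Complex.norm_real, norm_one]
    simp [abs_of_pos hcpos, Complex.norm_ofNat, _root_.abs_of_nonneg (Real.sqrt_nonneg _)]
  rw [hnc]
  calc 1 / (2 * Real.sqrt (2 * Real.pi)) * ‖∫ y : ℝ, g y * (f (x + y) + f (x - y)
      + Complex.I * f (-x - y) - Complex.I * f (-x + y))‖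
      ≤ 1 / (2 * Real.sqrt (2 * Real.pi)) *
        ((eLpNorm g P volume).toReal * (4 * (eLpNorm f Q volume).toReal)) := by
        apply mul_le_mul_of_nonneg_left hkey (by positivity)
    _ = 2 / Real.sqrt (2 * Real.pi) *
        ((eLpNorm g P volume).toReal * (eLpNorm f Q volume).toReal) := by
        field_simp; ring
    _ = Real.sqrt (2 / Real.pi) * (eLpNorm g P volume).toReal * (eLpNorm f Q volume).toReal := by
        rw [hc]; ring
end

section
/- For f, g ∈ L¹(ℝ), the Hartley transform of their Hartley–Fourier generalized convolution factorizes as H₁(f ∗_{H₁,F} g)(y) = (H₁ f)(y) · (F g)(y) for all y ∈ ℝ, where F is the Fourier transform. -/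
open MeasureTheory Real Complex Filter Topology

noncomputable def hartley (f : ℝ → ℂ) (y : ℝ) : ℂ :=
  (1 / Real.sqrt (2 * Real.pi)) *
    ∫ x : ℝ, f x * ((Real.cos (x * y) + Real.sin (x * y) : ℝ) : ℂ)

noncomputable def fourierT (f : ℝ → ℂ) (y : ℝ) : ℂ :=
  (1 / Real.sqrt (2 * Real.pi)) *
    ∫ x : ℝ, Complex.exp (-Complex.I * x * y) * f x

namespace Stmt9Aux

noncomputable def cas (y x : ℝ) : ℂ := ((Real.cos (x * y) + Real.sin (x * y) : ℝ) : ℂ)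

lemma hartley_eq (h : ℝ → ℂ) (y : ℝ) :
    hartley h y = (1 / (Real.sqrt (2 * Real.pi) : ℂ)) * ∫ x : ℝ, h x * cas y x := rfl

lemma cas_cont (y : ℝ) : Continuous (cas y) := by
  unfold cas; fun_prop

lemma cas_bound (y x : ℝ) : ‖cas y x‖ ≤ 2 := by
  have h1 : |Real.cos (x * y)| ≤ 1 := Real.abs_cos_le_one _
  have h2 : |Real.sin (x * y)| ≤ 1 := Real.abs_sin_le_one _
  calc ‖cas y x‖ = |Real.cos (x * y) + Real.sin (x * y)| := by
        simp only [cas, Complex.norm_real, Real.norm_eq_abs]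
    _ ≤ |Real.cos (x * y)| + |Real.sin (x * y)| := abs_add_le _ _
    _ ≤ 2 := by linarith

/-- Multiplying an integrable function by a bounded measurable function on the right. -/
lemma int_mul_bdd {α : Type*} [MeasurableSpace α] {μ : Measure α} {f w : α → ℂ}
    (hf : Integrable f μ) (hw : AEStronglyMeasurable w μ) (hb : ∀ x, ‖w x‖ ≤ 2) :
    Integrable (fun x => f x * w x) μ := by
  simpa [mul_comm] using hf.bdd_mul hw (Eventually.of_forall hb)

lemma integrable_neg_comp {f : ℝ → ℂ} (hf : Integrable f) :
    Integrable (fun x => f (-x)) := by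
  exact (MeasurePreserving.integrable_comp (Measure.measurePreserving_neg volume)
    hf.aestronglyMeasurable).mpr hf

/-- Joint integrability for the "subtraction" kernel. -/
lemma prod_int_sub {F G : ℝ → ℂ} (hF : Integrable F) (hG : Integrable G) :
    Integrable (fun p : ℝ × ℝ => G p.2 * F (p.1 - p.2)) (volume.prod volume) :=
  hG.convolution_integrand (ContinuousLinearMap.mul ℝ ℂ) hF

/-- Joint integrability for the "addition" kernel. -/
lemma prod_int_add' {F G : ℝ → ℂ} (hF : Integrable F) (hG : Integrable G) :
    Integrable (fun p : ℝ × ℝ => G p.2 * F (p.1 + p.2)) (volume.prod volume) := by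
  have h := prod_int_sub hF (integrable_neg_comp hG)
  have hψ : MeasurePreserving (fun p : ℝ × ℝ => (p.1, -p.2))
      (volume.prod volume) (volume.prod volume) :=
    (MeasurePreserving.id volume).prod (Measure.measurePreserving_neg volume)
  have h2 := (MeasurePreserving.integrable_comp hψ h.aestronglyMeasurable).mpr h
  exact h2.congr (Eventually.of_forall fun p => by
    simp [Function.comp, sub_neg_eq_add])

end Stmt9Aux

open Stmt9Aux

theorem stmt9 (f g : ℝ → ℂ) (hf : Integrable f) (hg : Integrable g) (y : ℝ) :
    hartley (HFconv f g) y = hartley f y * fourierT g y := by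
  classical
  have hmeas : ∀ (φ : ℝ → ℝ), Continuous φ →
      AEStronglyMeasurable (fun x : ℝ => cas y (φ x)) volume :=
    fun φ hφ => ((cas_cont y).comp hφ).aestronglyMeasurable
  have hfn : Integrable (fun u => f (-u)) := integrable_neg_comp hf
  set Cf : ℂ := ∫ u : ℝ, f u * cas y u with hCf
  -- pointwise trig identity
  have cas_key : ∀ u t : ℝ,
      cas y (u - t) + cas y (u + t) + Complex.I * cas y (-(u + t))
        - Complex.I * cas y (-(u - t))
      = cas y u * (2 * Complex.exp (-Complex.I * t * y)) := by
    intro u t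
    have he : Complex.exp (-Complex.I * t * y)
        = ((Real.cos (t * y) : ℝ) : ℂ) - Complex.I * ((Real.sin (t * y) : ℝ) : ℂ) := by
      have h0 : (-Complex.I * t * y) = ((-(t * y) : ℝ) : ℂ) * Complex.I := by push_cast; ring
      rw [h0, Complex.exp_mul_I, ← Complex.ofReal_cos, ← Complex.ofReal_sin,
        Real.cos_neg, Real.sin_neg]
      push_cast
      ring
    unfold cas
    rw [he]
    rw [show (u - t) * y = u * y - t * y by ring, show (u + t) * y = u * y + t * y by ring,
      show (-(u + t)) * y = -(u * y + t * y) by ring,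
      show (-(u - t)) * y = -(u * y - t * y) by ring,
      Real.cos_sub, Real.sin_sub, Real.cos_add, Real.sin_add,
      Real.cos_neg, Real.sin_neg, Real.cos_add, Real.sin_add, Real.cos_neg, Real.sin_neg,
      Real.cos_sub, Real.sin_sub]
    push_cast
    ring
  -- single-variable identity for fixed t
  have key : ∀ t : ℝ,
      (∫ x : ℝ, (f (x + t) + f (x - t) + Complex.I * f (-x - t) - Complex.I * f (-x + t))
        * cas y x)
      = (2 * Complex.exp (-Complex.I * t * y)) * Cf := by
    intro t
    have hC0 : Integrable (fun x : ℝ => f (-x - t)) :=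
      (hfn.comp_add_right t).congr (Eventually.of_forall fun x => by
        show f (-(x + t)) = f (-x - t); rw [show -(x + t) = -x - t by ring])
    have hD0 : Integrable (fun x : ℝ => f (-x + t)) :=
      (hfn.comp_sub_right t).congr (Eventually.of_forall fun x => by
        show f (-(x - t)) = f (-x + t); rw [show -(x - t) = -x + t by ring])
    have hA : Integrable (fun x => f (x + t) * cas y x) :=
      int_mul_bdd (hf.comp_add_right t) (hmeas id continuous_id) (fun x => cas_bound y x)
    have hB : Integrable (fun x => f (x - t) * cas y x) :=
      int_mul_bdd (hf.comp_sub_right t) (hmeas id continuous_id) (fun x => cas_bound y x)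
    have hC : Integrable (fun x => f (-x - t) * cas y x) :=
      int_mul_bdd hC0 (hmeas id continuous_id) (fun x => cas_bound y x)
    have hD : Integrable (fun x => f (-x + t) * cas y x) :=
      int_mul_bdd hD0 (hmeas id continuous_id) (fun x => cas_bound y x)
    have hIC : Integrable (fun x => Complex.I * (f (-x - t) * cas y x)) := hC.const_mul _
    have hID : Integrable (fun x => Complex.I * (f (-x + t) * cas y x)) := hD.const_mul _
    have hAB : Integrable (fun x => f (x + t) * cas y x + f (x - t) * cas y x) := hA.add hB
    have hABC : Integrable (fun x => f (x + t) * cas y x + f (x - t) * cas y x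
        + Complex.I * (f (-x - t) * cas y x)) := hAB.add hIC
    have hsplit : (∫ x : ℝ, (f (x + t) + f (x - t) + Complex.I * f (-x - t)
          - Complex.I * f (-x + t)) * cas y x)
        = (∫ x : ℝ, f (x + t) * cas y x) + (∫ x : ℝ, f (x - t) * cas y x)
          + Complex.I * (∫ x : ℝ, f (-x - t) * cas y x)
          - Complex.I * (∫ x : ℝ, f (-x + t) * cas y x) := by
      rw [← integral_const_mul Complex.I (fun x => f (-x - t) * cas y x),
        ← integral_const_mul Complex.I (fun x => f (-x + t) * cas y x),
        ← integral_add hA hB, ← integral_add hAB hIC, ← integral_sub hABC hID]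
      apply integral_congr_ae
      filter_upwards with x
      ring
    rw [hsplit]
    -- substitutions
    have eA : (∫ x : ℝ, f (x + t) * cas y x) = ∫ u : ℝ, f u * cas y (u - t) := by
      rw [← MeasureTheory.integral_add_right_eq_self (fun u => f u * cas y (u - t)) t]
      apply integral_congr_ae
      filter_upwards with x
      rw [show x + t - t = x by ring]
    have eB : (∫ x : ℝ, f (x - t) * cas y x) = ∫ u : ℝ, f u * cas y (u + t) := by
      rw [← MeasureTheory.integral_sub_right_eq_self (fun u => f u * cas y (u + t)) t]
      apply integral_congr_ae
      filter_upwards with x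
      rw [show x - t + t = x by ring]
    have eC : (∫ x : ℝ, f (-x - t) * cas y x) = ∫ u : ℝ, f u * cas y (-(u + t)) := by
      have h1 := MeasureTheory.integral_neg_eq_self
        (fun x => f (x - t) * cas y (-x)) (volume : Measure ℝ)
      calc (∫ x : ℝ, f (-x - t) * cas y x)
          = ∫ x : ℝ, f (-x - t) * cas y (- -x) := by
            apply integral_congr_ae; filter_upwards with x; rw [neg_neg]
        _ = ∫ x : ℝ, f (x - t) * cas y (-x) := h1
        _ = ∫ u : ℝ, f u * cas y (-(u + t)) := by
            rw [← MeasureTheory.integral_sub_right_eq_self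
              (fun u => f u * cas y (-(u + t))) t]
            apply integral_congr_ae; filter_upwards with x
            rw [show x - t + t = x by ring]
    have eD : (∫ x : ℝ, f (-x + t) * cas y x) = ∫ u : ℝ, f u * cas y (-(u - t)) := by
      have h1 := MeasureTheory.integral_neg_eq_self
        (fun x => f (x + t) * cas y (-x)) (volume : Measure ℝ)
      calc (∫ x : ℝ, f (-x + t) * cas y x)
          = ∫ x : ℝ, f (-x + t) * cas y (- -x) := by
            apply integral_congr_ae; filter_upwards with x; rw [neg_neg]
        _ = ∫ x : ℝ, f (x + t) * cas y (-x) := h1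
        _ = ∫ u : ℝ, f u * cas y (-(u - t)) := by
            rw [← MeasureTheory.integral_add_right_eq_self
              (fun u => f u * cas y (-(u - t))) t]
            apply integral_congr_ae; filter_upwards with x
            rw [show x + t - t = x by ring]
    rw [eA, eB, eC, eD]
    -- recombine
    have h1 : Integrable (fun u => f u * cas y (u - t)) :=
      int_mul_bdd hf (hmeas _ (by fun_prop)) (fun x => cas_bound y _)
    have h2 : Integrable (fun u => f u * cas y (u + t)) :=
      int_mul_bdd hf (hmeas _ (by fun_prop)) (fun x => cas_bound y _)
    have h3 : Integrable (fun u => f u * cas y (-(u + t))) :=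
      int_mul_bdd hf (hmeas _ (by fun_prop)) (fun x => cas_bound y _)
    have h4 : Integrable (fun u => f u * cas y (-(u - t))) :=
      int_mul_bdd hf (hmeas _ (by fun_prop)) (fun x => cas_bound y _)
    have hI3 : Integrable (fun u => Complex.I * (f u * cas y (-(u + t)))) := h3.const_mul _
    have hI4 : Integrable (fun u => Complex.I * (f u * cas y (-(u - t)))) := h4.const_mul _
    have h12 : Integrable (fun u => f u * cas y (u - t) + f u * cas y (u + t)) := h1.add h2
    have h123 : Integrable (fun u => f u * cas y (u - t) + f u * cas y (u + t)
        + Complex.I * (f u * cas y (-(u + t)))) := h12.add hI3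
    have hcomb : (∫ u : ℝ, f u * cas y (u - t)) + (∫ u : ℝ, f u * cas y (u + t))
          + Complex.I * (∫ u : ℝ, f u * cas y (-(u + t)))
          - Complex.I * (∫ u : ℝ, f u * cas y (-(u - t)))
        = ∫ u : ℝ, (f u * cas y u) * (2 * Complex.exp (-Complex.I * t * y)) := by
      rw [← integral_const_mul Complex.I (fun u => f u * cas y (-(u + t))),
        ← integral_const_mul Complex.I (fun u => f u * cas y (-(u - t))),
        ← integral_add h1 h2, ← integral_add h12 hI3, ← integral_sub h123 hI4]
      apply integral_congr_ae
      filter_upwards with u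
      calc f u * cas y (u - t) + f u * cas y (u + t) + Complex.I * (f u * cas y (-(u + t)))
            - Complex.I * (f u * cas y (-(u - t)))
          = f u * (cas y (u - t) + cas y (u + t) + Complex.I * cas y (-(u + t))
              - Complex.I * cas y (-(u - t))) := by ring
        _ = f u * (cas y u * (2 * Complex.exp (-Complex.I * t * y))) := by rw [cas_key u t]
        _ = (f u * cas y u) * (2 * Complex.exp (-Complex.I * t * y)) := by ring
    rw [hcomb, integral_mul_const, ← hCf]
    ring
  -- joint integrability of the full integrand
  have hcasm : AEStronglyMeasurable (fun p : ℝ × ℝ => cas y p.1) (volume.prod volume) :=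
    ((cas_cont y).comp continuous_fst).aestronglyMeasurable
  have hProd : Integrable
      (fun p : ℝ × ℝ => (g p.2 * (f (p.1 + p.2) + f (p.1 - p.2)
        + Complex.I * f (-p.1 - p.2) - Complex.I * f (-p.1 + p.2))) * cas y p.1)
      (volume.prod volume) := by
    have t1 : Integrable (fun p : ℝ × ℝ => (g p.2 * f (p.1 + p.2)) * cas y p.1)
        (volume.prod volume) :=
      int_mul_bdd (prod_int_add' hf hg) hcasm (fun p => cas_bound y _)
    have t2 : Integrable (fun p : ℝ × ℝ => (g p.2 * f (p.1 - p.2)) * cas y p.1)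
        (volume.prod volume) :=
      int_mul_bdd (prod_int_sub hf hg) hcasm (fun p => cas_bound y _)
    have t3 : Integrable (fun p : ℝ × ℝ => (g p.2 * f (-p.1 - p.2)) * cas y p.1)
        (volume.prod volume) := by
      refine int_mul_bdd ?_ hcasm (fun p => cas_bound y _)
      exact (prod_int_add' hfn hg).congr (Eventually.of_forall fun p => by
        show g p.2 * f (-(p.1 + p.2)) = g p.2 * f (-p.1 - p.2)
        rw [show -(p.1 + p.2) = -p.1 - p.2 by ring])
    have t4 : Integrable (fun p : ℝ × ℝ => (g p.2 * f (-p.1 + p.2)) * cas y p.1)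
        (volume.prod volume) := by
      refine int_mul_bdd ?_ hcasm (fun p => cas_bound y _)
      exact (prod_int_sub hfn hg).congr (Eventually.of_forall fun p => by
        show g p.2 * f (-(p.1 - p.2)) = g p.2 * f (-p.1 + p.2)
        rw [show -(p.1 - p.2) = -p.1 + p.2 by ring])
    have hIt3 : Integrable (fun p : ℝ × ℝ =>
        Complex.I * ((g p.2 * f (-p.1 - p.2)) * cas y p.1)) (volume.prod volume) :=
      t3.const_mul _
    have hIt4 : Integrable (fun p : ℝ × ℝ =>
        Complex.I * ((g p.2 * f (-p.1 + p.2)) * cas y p.1)) (volume.prod volume) :=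
      t4.const_mul _
    refine ((((t1.add t2).add hIt3).sub hIt4).congr (Eventually.of_forall fun p => ?_))
    simp only [Pi.add_apply, Pi.sub_apply]
    ring
  -- swap the order of integration
  have hswap : (∫ x : ℝ, ∫ t : ℝ, (g t * (f (x + t) + f (x - t) + Complex.I * f (-x - t)
        - Complex.I * f (-x + t))) * cas y x)
      = ∫ t : ℝ, ∫ x : ℝ, (g t * (f (x + t) + f (x - t) + Complex.I * f (-x - t)
        - Complex.I * f (-x + t))) * cas y x :=
    integral_integral_swap hProd
  -- evaluate the inner integral after swapping
  have hinner : (∫ t : ℝ, ∫ x : ℝ, (g t * (f (x + t) + f (x - t) + Complex.I * f (-x - t)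
        - Complex.I * f (-x + t))) * cas y x)
      = (Cf * 2) * ∫ t : ℝ, Complex.exp (-Complex.I * t * y) * g t := by
    rw [← integral_const_mul (Cf * 2) (fun t : ℝ => Complex.exp (-Complex.I * t * y) * g t)]
    apply integral_congr_ae
    filter_upwards with t
    have hpull : (∫ x : ℝ, (g t * (f (x + t) + f (x - t) + Complex.I * f (-x - t)
          - Complex.I * f (-x + t))) * cas y x)
        = g t * ∫ x : ℝ, (f (x + t) + f (x - t) + Complex.I * f (-x - t)
          - Complex.I * f (-x + t)) * cas y x := by
      rw [← integral_const_mul (g t)]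
      apply integral_congr_ae
      filter_upwards with x
      ring
    rw [hpull, key t]
    ring
  -- express the LHS
  have hstep : hartley (HFconv f g) y
      = (1 / (Real.sqrt (2 * Real.pi) : ℂ)) *
        ((1 / (2 * (Real.sqrt (2 * Real.pi) : ℂ))) *
          ∫ x : ℝ, ∫ t : ℝ, (g t * (f (x + t) + f (x - t) + Complex.I * f (-x - t)
            - Complex.I * f (-x + t))) * cas y x) := by
    rw [hartley_eq]
    congr 1
    rw [← integral_const_mul]
    apply integral_congr_ae
    filter_upwards with x
    unfold HFconv
    rw [mul_assoc, ← integral_mul_const]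
  rw [hstep, hswap, hinner, hartley_eq, ← hCf]
  unfold fourierT
  rw [show (1 / (2 * (Real.sqrt (2 * Real.pi) : ℂ)))
      = (1 / 2) * (1 / (Real.sqrt (2 * Real.pi) : ℂ)) from by
    rw [one_div, one_div, one_div, mul_inv]]
  ring
end

section
/- (Titchmarsh-type theorem) Let f, g be continuous functions on ℝ with ∫_ℝ |f(x)| e^{|x|} dx < ∞ and ∫_ℝ |g(x)| e^{|x|} dx < ∞. Then (f ∗_{H₁,F} g)(x) = 0 for almost every x ∈ ℝ if and only if f = 0 almost everywhere or g = 0 almost everywhere. -/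
open MeasureTheory Real Complex Filter Topology

open FourierTransform


noncomputable def FT (f : ℝ → ℂ) (z : ℂ) : ℂ :=
  ∫ x : ℝ, f x * Complex.exp ((-2 * Real.pi * x : ℝ) * z * Complex.I)

noncomputable def eK (ξ x : ℝ) : ℂ :=
  Complex.exp ((-2 * Real.pi * x : ℝ) * (ξ : ℂ) * Complex.I)

noncomputable def eP (ξ y : ℝ) : ℂ :=
  Complex.exp ((2 * Real.pi * y : ℝ) * (ξ : ℂ) * Complex.I)

lemma FT_real (f : ℝ → ℂ) (ξ : ℝ) : FT f (ξ : ℂ) = ∫ x : ℝ, f x * eK ξ x := rfl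

lemma FT_neg_real (f : ℝ → ℂ) (ξ : ℝ) : FT f (-(ξ : ℂ)) = ∫ x : ℝ, f x * eP ξ x := by
  rw [FT]
  congr 1; ext x
  congr 1
  rw [eP]
  congr 1
  push_cast
  ring


lemma exp_merge {a b c ξ : ℝ} (h : a + b = c) :
    Complex.exp ((a : ℂ) * (ξ : ℂ) * Complex.I) * Complex.exp ((b : ℂ) * (ξ : ℂ) * Complex.I)
      = Complex.exp ((c : ℂ) * (ξ : ℂ) * Complex.I) := by
  rw [← Complex.exp_add]
  congr 1
  rw [← h]
  push_cast
  ring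

lemma shift1 (f : ℝ → ℂ) (ξ y : ℝ) :
    ∫ x : ℝ, f (x + y) * eK ξ x = eP ξ y * FT f (ξ : ℂ) := by
  have hpt : ∀ x : ℝ, f (x + y) * eK ξ x = (fun u => f u * eK ξ u) (x + y) * eP ξ y := by
    intro x
    simp only [eK, eP]
    conv_rhs => rw [mul_assoc]
    rw [exp_merge (a := -2*Real.pi*(x+y)) (b := 2*Real.pi*y) (c := -2*Real.pi*x) (by ring)]
  rw [integral_congr_ae (ae_of_all _ hpt), integral_mul_const,
    integral_add_right_eq_self (fun u => f u * eK ξ u) y, ← FT_real, mul_comm]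

lemma shift2 (f : ℝ → ℂ) (ξ y : ℝ) :
    ∫ x : ℝ, f (x - y) * eK ξ x = eK ξ y * FT f (ξ : ℂ) := by
  have hpt : ∀ x : ℝ, f (x - y) * eK ξ x = (fun u => f u * eK ξ u) (x - y) * eK ξ y := by
    intro x
    simp only [eK]
    conv_rhs => rw [mul_assoc]
    rw [exp_merge (a := -2*Real.pi*(x-y)) (b := -2*Real.pi*y) (c := -2*Real.pi*x) (by ring)]
  rw [integral_congr_ae (ae_of_all _ hpt), integral_mul_const,
    integral_sub_right_eq_self (fun u => f u * eK ξ u) y, ← FT_real, mul_comm]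

lemma shift3 (f : ℝ → ℂ) (ξ y : ℝ) :
    ∫ x : ℝ, f (-x - y) * eK ξ x = eP ξ y * FT f (-(ξ : ℂ)) := by
  have hpt : ∀ x : ℝ, f (-x - y) * eK ξ x
      = (fun u => (fun v => f v * eP ξ v) (-u)) (x + y) * eP ξ y := by
    intro x
    simp only [eP, eK]
    have : -(x + y) = -x - y := by ring
    rw [this]
    conv_rhs => rw [mul_assoc]
    rw [exp_merge (a := 2*Real.pi*(-x-y)) (b := 2*Real.pi*y) (c := -2*Real.pi*x) (by ring)]
  rw [integral_congr_ae (ae_of_all _ hpt), integral_mul_const,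
    integral_add_right_eq_self (fun u => (fun v => f v * eP ξ v) (-u)) y,
    integral_neg_eq_self (fun v => f v * eP ξ v), ← FT_neg_real, mul_comm]

lemma shift4 (f : ℝ → ℂ) (ξ y : ℝ) :
    ∫ x : ℝ, f (-x + y) * eK ξ x = eK ξ y * FT f (-(ξ : ℂ)) := by
  have hpt : ∀ x : ℝ, f (-x + y) * eK ξ x
      = (fun u => (fun v => f v * eP ξ v) (-u)) (x - y) * eK ξ y := by
    intro x
    simp only [eP, eK]
    have : -(x - y) = -x + y := by ring
    rw [this]
    conv_rhs => rw [mul_assoc]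
    rw [exp_merge (a := 2*Real.pi*(-x+y)) (b := -2*Real.pi*y) (c := -2*Real.pi*x) (by ring)]
  rw [integral_congr_ae (ae_of_all _ hpt), integral_mul_const,
    integral_sub_right_eq_self (fun u => (fun v => f v * eP ξ v) (-u)) y,
    integral_neg_eq_self (fun v => f v * eP ξ v), ← FT_neg_real, mul_comm]

lemma norm_eK (ξ x : ℝ) : ‖eK ξ x‖ = 1 := by
  rw [eK, Complex.norm_exp]
  simp [Complex.mul_re, Complex.mul_im]

lemma continuous_eK (ξ : ℝ) : Continuous (eK ξ) := by
  unfold eK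
  fun_prop

lemma integrable_mul_unit {h e : ℝ → ℂ} (hi : Integrable h) (he : Continuous e)
    (hu : ∀ x, ‖e x‖ = 1) : Integrable (fun x => h x * e x) :=
  hi.mono (hi.1.mul he.aestronglyMeasurable)
    (ae_of_all _ fun x => by rw [norm_mul, hu, mul_one])

lemma inner_int {f : ℝ → ℂ} (g : ℝ → ℂ) (hfi : Integrable f) (ξ y : ℝ) :
    ∫ x : ℝ, g y * (f (x + y) + f (x - y) + Complex.I * f (-x - y)
        - Complex.I * f (-x + y)) * eK ξ x
      = g y * ((eP ξ y + eK ξ y) * FT f (ξ : ℂ)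
          + Complex.I * ((eP ξ y - eK ξ y) * FT f (-(ξ : ℂ)))) := by
  have h1 : Integrable (fun x => f (x + y) * eK ξ x) :=
    integrable_mul_unit (hfi.comp_add_right y) (continuous_eK ξ) (norm_eK ξ)
  have h2 : Integrable (fun x => f (x - y) * eK ξ x) :=
    integrable_mul_unit (hfi.comp_sub_right y) (continuous_eK ξ) (norm_eK ξ)
  have h3 : Integrable (fun x => f (-x - y) * eK ξ x) := by
    have : Integrable (fun x : ℝ => f (-x - y)) := by
      have := (hfi.comp_sub_right y).comp_neg
      simpa [sub_eq_add_neg] using this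
    exact integrable_mul_unit this (continuous_eK ξ) (norm_eK ξ)
  have h4 : Integrable (fun x => f (-x + y) * eK ξ x) :=
    integrable_mul_unit ((hfi.comp_add_right y).comp_neg) (continuous_eK ξ) (norm_eK ξ)
  have expand : ∀ x : ℝ, g y * (f (x + y) + f (x - y) + Complex.I * f (-x - y)
        - Complex.I * f (-x + y)) * eK ξ x
      = g y * (f (x + y) * eK ξ x + f (x - y) * eK ξ x
          + Complex.I * (f (-x - y) * eK ξ x) - Complex.I * (f (-x + y) * eK ξ x)) :=
    fun x => by ring
  rw [integral_congr_ae (ae_of_all _ expand), integral_const_mul, integral_sub, integral_add,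
    integral_add, integral_const_mul, integral_const_mul, shift1, shift2, shift3, shift4]
  · ring
  · exact h1
  · exact h2
  · exact h1.add h2
  · exact h3.const_mul _
  · exact (h1.add h2).add (h3.const_mul _)
  · exact h4.const_mul _

lemma norm_eP (ξ y : ℝ) : ‖eP ξ y‖ = 1 := by
  rw [eP, Complex.norm_exp]
  simp [Complex.mul_re, Complex.mul_im]

lemma continuous_eP (ξ : ℝ) : Continuous (eP ξ) := by
  unfold eP
  fun_prop

lemma prod_integrable {f g : ℝ → ℂ} (hfc : Continuous f) (hgc : Continuous g)
    (hfi : Integrable f) (hgi : Integrable g) (ξ : ℝ) :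
    Integrable (Function.uncurry fun x y =>
      g y * (f (x + y) + f (x - y) + Complex.I * f (-x - y) - Complex.I * f (-x + y)) * eK ξ x)
      (volume.prod volume) := by
  have hB : Integrable (fun p : ℝ × ℝ => ‖f p.1‖ * ‖g p.2‖) (volume.prod volume) :=
    hfi.norm.mul_prod hgi.norm
  have hBm := hB.1
  have hN : MeasurePreserving (fun p : ℝ × ℝ => (-p.1, p.2))
      (volume.prod volume) (volume.prod volume) :=
    (Measure.measurePreserving_neg volume).prod (MeasurePreserving.id volume)
  have hT1 : MeasurePreserving (fun p : ℝ × ℝ => (p.1 + p.2, p.2))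
      (volume.prod volume) (volume.prod volume) := measurePreserving_add_prod volume volume
  have hT2 : MeasurePreserving (fun p : ℝ × ℝ => (p.1 - p.2, p.2))
      (volume.prod volume) (volume.prod volume) := measurePreserving_sub_prod volume volume
  have h1 : Integrable (fun p : ℝ × ℝ => ‖f (p.1 + p.2)‖ * ‖g p.2‖) (volume.prod volume) :=
    (hT1.integrable_comp hBm).2 hB
  have h2 : Integrable (fun p : ℝ × ℝ => ‖f (p.1 - p.2)‖ * ‖g p.2‖) (volume.prod volume) :=
    (hT2.integrable_comp hBm).2 hB
  have h3 : Integrable (fun p : ℝ × ℝ => ‖f (-(p.1 + p.2))‖ * ‖g p.2‖) (volume.prod volume) := by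
    exact ((hN.comp hT1).integrable_comp hBm).2 hB
  have h4 : Integrable (fun p : ℝ × ℝ => ‖f (-p.1 + p.2)‖ * ‖g p.2‖) (volume.prod volume) := by
    exact ((hT1.comp hN).integrable_comp hBm).2 hB
  have hcont : Continuous (Function.uncurry fun x y =>
      g y * (f (x + y) + f (x - y) + Complex.I * f (-x - y) - Complex.I * f (-x + y))
        * eK ξ x) := by
    unfold eK Function.uncurry
    fun_prop
  refine Integrable.mono' (((h1.add h2).add h3).add h4) hcont.aestronglyMeasurable
    (ae_of_all _ fun p => ?_)
  obtain ⟨x, y⟩ := p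
  simp only [Function.uncurry_apply_pair]
  rw [norm_mul, norm_mul, norm_eK, mul_one]
  have hxy : -x - y = -(x + y) := by ring
  rw [hxy]
  have hS : ‖f (x + y) + f (x - y) + Complex.I * f (-(x + y)) - Complex.I * f (-x + y)‖
      ≤ ‖f (x + y)‖ + ‖f (x - y)‖ + ‖f (-(x + y))‖ + ‖f (-x + y)‖ := by
    have e3 : ‖Complex.I * f (-(x + y))‖ = ‖f (-(x + y))‖ := by
      rw [norm_mul, Complex.norm_I, one_mul]
    have e4 : ‖Complex.I * f (-x + y)‖ = ‖f (-x + y)‖ := by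
      rw [norm_mul, Complex.norm_I, one_mul]
    calc ‖f (x + y) + f (x - y) + Complex.I * f (-(x + y)) - Complex.I * f (-x + y)‖
        ≤ ‖f (x + y) + f (x - y) + Complex.I * f (-(x + y))‖ + ‖Complex.I * f (-x + y)‖ :=
          norm_sub_le _ _
      _ ≤ ‖f (x + y) + f (x - y)‖ + ‖Complex.I * f (-(x + y))‖ + ‖Complex.I * f (-x + y)‖ := by
          gcongr
          exact norm_add_le _ _
      _ ≤ ‖f (x + y)‖ + ‖f (x - y)‖ + ‖Complex.I * f (-(x + y))‖ + ‖Complex.I * f (-x + y)‖ := by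
          gcongr
          exact norm_add_le _ _
      _ = ‖f (x + y)‖ + ‖f (x - y)‖ + ‖f (-(x + y))‖ + ‖f (-x + y)‖ := by rw [e3, e4]
  calc ‖g y‖ * ‖f (x + y) + f (x - y) + Complex.I * f (-(x + y)) - Complex.I * f (-x + y)‖
      ≤ ‖g y‖ * (‖f (x + y)‖ + ‖f (x - y)‖ + ‖f (-(x + y))‖ + ‖f (-x + y)‖) :=
        mul_le_mul_of_nonneg_left hS (norm_nonneg _)
    _ = ‖f (x + y)‖ * ‖g y‖ + ‖f (x - y)‖ * ‖g y‖ + ‖f (-(x + y))‖ * ‖g y‖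
        + ‖f (-x + y)‖ * ‖g y‖ := by ring

lemma P_zero {f g : ℝ → ℂ} (hfc : Continuous f) (hgc : Continuous g)
    (hfi : Integrable f) (hgi : Integrable g)
    (h0 : ∀ᵐ x : ℝ ∂volume, (∫ y : ℝ, g y * (f (x + y) + f (x - y)
        + Complex.I * f (-x - y) - Complex.I * f (-x + y))) = 0) (ξ : ℝ) :
    FT f (ξ : ℂ) * (FT g (-(ξ : ℂ)) + FT g (ξ : ℂ))
      + Complex.I * FT f (-(ξ : ℂ)) * (FT g (-(ξ : ℂ)) - FT g (ξ : ℂ)) = 0 := by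
  have step0 : (∫ x : ℝ, (∫ y : ℝ, g y * (f (x + y) + f (x - y)
      + Complex.I * f (-x - y) - Complex.I * f (-x + y))) * eK ξ x) = 0 := by
    apply integral_eq_zero_of_ae
    filter_upwards [h0] with x hx
    simp [hx]
  have step1 : (∫ x : ℝ, (∫ y : ℝ, g y * (f (x + y) + f (x - y)
        + Complex.I * f (-x - y) - Complex.I * f (-x + y))) * eK ξ x)
      = ∫ x : ℝ, ∫ y : ℝ, g y * (f (x + y) + f (x - y)
        + Complex.I * f (-x - y) - Complex.I * f (-x + y)) * eK ξ x :=
    integral_congr_ae (ae_of_all _ fun x => (integral_mul_const _ _).symm)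
  have step2 := integral_integral_swap (prod_integrable hfc hgc hfi hgi ξ)
  have step3 : (∫ y : ℝ, ∫ x : ℝ, g y * (f (x + y) + f (x - y)
        + Complex.I * f (-x - y) - Complex.I * f (-x + y)) * eK ξ x)
      = ∫ y : ℝ, g y * ((eP ξ y + eK ξ y) * FT f (ξ : ℂ)
          + Complex.I * ((eP ξ y - eK ξ y) * FT f (-(ξ : ℂ)))) :=
    integral_congr_ae (ae_of_all _ fun y => inner_int g hfi ξ y)
  have hgP : Integrable (fun y => g y * eP ξ y) :=
    integrable_mul_unit hgi (continuous_eP ξ) (norm_eP ξ)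
  have hgK : Integrable (fun y => g y * eK ξ y) :=
    integrable_mul_unit hgi (continuous_eK ξ) (norm_eK ξ)
  have expand2 : ∀ y : ℝ, g y * ((eP ξ y + eK ξ y) * FT f (ξ : ℂ)
        + Complex.I * ((eP ξ y - eK ξ y) * FT f (-(ξ : ℂ))))
      = ((g y * eP ξ y) * FT f (ξ : ℂ) + (g y * eK ξ y) * FT f (ξ : ℂ))
        + ((g y * eP ξ y) * (Complex.I * FT f (-(ξ : ℂ)))
          - (g y * eK ξ y) * (Complex.I * FT f (-(ξ : ℂ)))) := fun y => by ring
  have step4 : (∫ y : ℝ, g y * ((eP ξ y + eK ξ y) * FT f (ξ : ℂ)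
        + Complex.I * ((eP ξ y - eK ξ y) * FT f (-(ξ : ℂ)))))
      = (FT g (-(ξ : ℂ)) * FT f (ξ : ℂ) + FT g (ξ : ℂ) * FT f (ξ : ℂ))
        + (FT g (-(ξ : ℂ)) * (Complex.I * FT f (-(ξ : ℂ)))
          - FT g (ξ : ℂ) * (Complex.I * FT f (-(ξ : ℂ)))) := by
    rw [integral_congr_ae (ae_of_all _ expand2), integral_add, integral_add, integral_sub,
      integral_mul_const, integral_mul_const, integral_mul_const, integral_mul_const,
      ← FT_neg_real, ← FT_real]
    · exact hgP.mul_const _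
    · exact hgK.mul_const _
    · exact hgP.mul_const _
    · exact hgK.mul_const _
    · exact (hgP.mul_const _).add (hgK.mul_const _)
    · exact (hgP.mul_const _).sub (hgK.mul_const _)
  have h := step0
  rw [step1, step2, step3, step4] at h
  linear_combination h


def strip : Set ℂ := {z : ℂ | |z.im| < (2 * Real.pi)⁻¹}

lemma isOpen_strip : IsOpen strip := by
  have : strip = Complex.im ⁻¹' {t : ℝ | |t| < (2 * Real.pi)⁻¹} := rfl
  rw [this]
  exact (isOpen_lt (_root_.continuous_abs) continuous_const).preimage Complex.continuous_im

lemma isPreconnected_strip : IsPreconnected strip := by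
  have : Convex ℝ strip := by
    have h : strip = Complex.imCLM ⁻¹' (Set.Ioo (-(2 * Real.pi)⁻¹) ((2 * Real.pi)⁻¹)) := by
      ext z; simp [strip, abs_lt]
    rw [h]
    exact (convex_Ioo _ _).linear_preimage (Complex.imCLM : ℂ →L[ℝ] ℝ).toLinearMap
  exact this.isPreconnected

lemma real_mem_strip (ξ : ℝ) : (ξ : ℂ) ∈ strip := by
  simp [strip]
  positivity

lemma neg_mem_strip {z : ℂ} (hz : z ∈ strip) : -z ∈ strip := by
  simpa [strip, abs_neg] using hz


lemma norm_exp_aux (x : ℝ) (z : ℂ) :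
    ‖Complex.exp ((-2 * Real.pi * x : ℝ) * z * Complex.I)‖ =
      Real.exp (2 * Real.pi * x * z.im) := by
  rw [Complex.norm_exp]
  congr 1
  simp [Complex.mul_re, Complex.mul_im]
  try ring

lemma exp_strip_bound {x : ℝ} {z : ℂ} {δ : ℝ} (hδ : |z.im| ≤ δ) :
    Real.exp (2 * Real.pi * x * z.im) ≤ Real.exp (2 * Real.pi * δ * |x|) := by
  apply Real.exp_le_exp.2
  calc 2 * Real.pi * x * z.im ≤ |2 * Real.pi * x * z.im| := le_abs_self _
    _ = 2 * Real.pi * |x| * |z.im| := by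
        rw [abs_mul, abs_mul]
        rw [_root_.abs_of_nonneg (by positivity : (0:ℝ) ≤ 2 * Real.pi)]
    _ ≤ 2 * Real.pi * |x| * δ := by
        apply mul_le_mul_of_nonneg_left hδ (by positivity)
    _ = 2 * Real.pi * δ * |x| := by ring

lemma FT_differentiableAt {f : ℝ → ℂ} (hfc : Continuous f)
    (hf : Integrable (fun x : ℝ => ‖f x‖ * Real.exp |x|))
    {z₀ : ℂ} (hz : z₀ ∈ strip) : DifferentiableAt ℂ (FT f) z₀ := by
  have hπ : (0:ℝ) < 2 * Real.pi := by positivity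
  set δ : ℝ := (|z₀.im| + (2 * Real.pi)⁻¹) / 2 with hδdef
  set ε : ℝ := ((2 * Real.pi)⁻¹ - |z₀.im|) / 2 with hεdef
  have hz' : |z₀.im| < (2 * Real.pi)⁻¹ := hz
  have hε : 0 < ε := by simp only [hεdef]; linarith
  have hδ0 : 0 ≤ δ := by simp only [hδdef]; positivity
  have hδlt : 2 * Real.pi * δ < 1 := by
    have : δ < (2 * Real.pi)⁻¹ := by simp only [hδdef]; linarith
    calc 2 * Real.pi * δ < 2 * Real.pi * (2 * Real.pi)⁻¹ :=
          (mul_lt_mul_of_pos_left this hπ)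
      _ = 1 := mul_inv_cancel₀ (ne_of_gt hπ)
  set b : ℝ := 1 - 2 * Real.pi * δ with hbdef
  have hb : 0 < b := by simp only [hbdef]; linarith
  -- the derivative integrand
  set F : ℂ → ℝ → ℂ := fun z x => f x * Complex.exp ((-2 * Real.pi * x : ℝ) * z * Complex.I)
    with hF
  set F' : ℂ → ℝ → ℂ := fun z x =>
    f x * (((-2 * Real.pi * x : ℝ) : ℂ) * Complex.I *
      Complex.exp ((-2 * Real.pi * x : ℝ) * z * Complex.I)) with hF'
  have key := hasDerivAt_integral_of_dominated_loc_of_deriv_le (μ := volume)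
    (F := F) (F' := F') (x₀ := z₀)
    (bound := fun x => (2 * Real.pi / b) * (‖f x‖ * Real.exp |x|)) (Metric.ball_mem_nhds z₀ hε)
    ?_ ?_ ?_ ?_ ?_ ?_
  · exact key.2.differentiableAt
  · -- measurability of F z
    filter_upwards with z
    apply Continuous.aestronglyMeasurable
    exact hfc.mul (Complex.continuous_exp.comp (by fun_prop))
  · -- integrability of F z₀
    refine hf.mono
      ((hfc.mul (Complex.continuous_exp.comp (by fun_prop))).aestronglyMeasurable)
      (ae_of_all _ fun x => ?_)
    rw [norm_mul, norm_exp_aux, Real.norm_eq_abs,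
      _root_.abs_of_nonneg (mul_nonneg (norm_nonneg _) (Real.exp_nonneg _))]
    have h1 : Real.exp (2 * Real.pi * x * z₀.im) ≤ Real.exp |x| := by
      refine le_trans (exp_strip_bound (le_of_lt hz')) (Real.exp_le_exp.2 ?_)
      rw [mul_inv_cancel₀ (ne_of_gt hπ), one_mul]
    exact mul_le_mul_of_nonneg_left h1 (norm_nonneg _)
  · -- measurability of F' z₀
    apply Continuous.aestronglyMeasurable
    exact hfc.mul ((by fun_prop : Continuous fun x : ℝ =>
      (((-2 * Real.pi * x : ℝ) : ℂ) * Complex.I)).mul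
      (Complex.continuous_exp.comp (by fun_prop)))
  · -- bound
    refine ae_of_all _ fun x z hzball => ?_
    have him : |z.im| ≤ δ := by
      have h1 : |z.im - z₀.im| ≤ ‖z - z₀‖ := by
        rw [← Complex.sub_im]
        exact Complex.abs_im_le_norm _
      have h2 : ‖z - z₀‖ < ε := by
        rwa [Metric.mem_ball, dist_eq_norm] at hzball
      have := abs_sub_abs_le_abs_sub z.im z₀.im
      have hδeq : |z₀.im| + ε = δ := by simp only [hεdef, hδdef]; ring
      nlinarith [abs_nonneg z.im, abs_nonneg z₀.im]
    rw [hF']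
    simp only
    rw [norm_mul, norm_mul, norm_exp_aux]
    have habs : ‖(((-2 * Real.pi * x : ℝ)) : ℂ) * Complex.I‖ = 2 * Real.pi * |x| := by
      rw [norm_mul, Complex.norm_I, mul_one, Complex.norm_real, Real.norm_eq_abs]
      rw [abs_mul, abs_of_nonpos (by linarith : -2 * Real.pi ≤ 0)]
      ring_nf
    rw [habs]
    have hexp : Real.exp (2 * Real.pi * x * z.im) ≤ Real.exp (2 * Real.pi * δ * |x|) :=
      exp_strip_bound him
    have hxb : 2 * Real.pi * |x| ≤ (2 * Real.pi / b) * Real.exp (b * |x|) := by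
      have h0 : b * |x| ≤ Real.exp (b * |x|) := by
        have := Real.add_one_le_exp (b * |x|)
        linarith
      have : |x| ≤ Real.exp (b * |x|) / b := by
        rw [le_div_iff₀ hb]; linarith [h0]
      calc 2 * Real.pi * |x| ≤ 2 * Real.pi * (Real.exp (b * |x|) / b) :=
            mul_le_mul_of_nonneg_left this (by positivity)
        _ = (2 * Real.pi / b) * Real.exp (b * |x|) := by ring
    calc ‖f x‖ * (2 * Real.pi * |x| * Real.exp (2 * Real.pi * x * z.im))
        ≤ ‖f x‖ * ((2 * Real.pi / b) * Real.exp (b * |x|) * Real.exp (2 * Real.pi * δ * |x|)) := by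
          apply mul_le_mul_of_nonneg_left _ (norm_nonneg _)
          exact mul_le_mul hxb hexp (Real.exp_nonneg _) (by positivity)
      _ = (2 * Real.pi / b) * (‖f x‖ * Real.exp |x|) := by
          have hmul : Real.exp (b * |x|) * Real.exp (2 * Real.pi * δ * |x|) = Real.exp |x| := by
            rw [← Real.exp_add]
            congr 1
            simp only [hbdef]; ring
          calc ‖f x‖ * (2 * Real.pi / b * Real.exp (b * |x|) * Real.exp (2 * Real.pi * δ * |x|))
              = 2 * Real.pi / b * (‖f x‖ * (Real.exp (b * |x|) * Real.exp (2 * Real.pi * δ * |x|))) := by ring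
            _ = 2 * Real.pi / b * (‖f x‖ * Real.exp |x|) := by rw [hmul]
  · -- bound integrable
    exact hf.const_mul _
  · -- differentiability
    refine ae_of_all _ fun x z hzball => ?_
    have h1 : HasDerivAt (fun w : ℂ => ((-2 * Real.pi * x : ℝ) : ℂ) * w * Complex.I)
        (((-2 * Real.pi * x : ℝ) : ℂ) * Complex.I) z := by
      simpa using (((hasDerivAt_id z).const_mul (((-2 * Real.pi * x : ℝ)) : ℂ)).mul_const
        Complex.I)
    have h2 := h1.cexp
    simpa [hF, hF', mul_comm, mul_left_comm, mul_assoc] using h2.const_mul (f x)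

lemma FT_analytic {f : ℝ → ℂ} (hfc : Continuous f)
    (hf : Integrable (fun x : ℝ => ‖f x‖ * Real.exp |x|)) :
    AnalyticOnNhd ℂ (FT f) strip := by
  have : IsOpen strip := by
    have : strip = Complex.im ⁻¹' {t : ℝ | |t| < (2 * Real.pi)⁻¹} := rfl
    rw [this]
    exact (isOpen_lt (_root_.continuous_abs) continuous_const).preimage Complex.continuous_im
  exact DifferentiableOn.analyticOnNhd
    (fun z hz => (FT_differentiableAt hfc hf hz).differentiableWithinAt) this


lemma integrable_of_wt {f : ℝ → ℂ} (hfc : Continuous f)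
    (hf : Integrable (fun x : ℝ => ‖f x‖ * Real.exp |x|)) : Integrable f := by
  refine hf.mono hfc.aestronglyMeasurable (ae_of_all _ fun x => ?_)
  have h1 : (1:ℝ) ≤ Real.exp |x| := Real.one_le_exp (abs_nonneg x)
  have : ‖f x‖ * 1 ≤ ‖f x‖ * Real.exp |x| :=
    mul_le_mul_of_nonneg_left h1 (norm_nonneg _)
  simpa [_root_.abs_of_nonneg (mul_nonneg (norm_nonneg _) (Real.exp_nonneg _))] using this

lemma FT_real_eq (f : ℝ → ℂ) (ξ : ℝ) : FT f (ξ : ℂ) = 𝓕 f ξ := by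
  rw [Real.fourier_real_eq_integral_exp_smul, FT]
  congr 1
  ext x
  rw [smul_eq_mul, mul_comm]
  congr 2
  push_cast
  ring


lemma analytic_mul_eq_zero {S : Set ℂ} (hS : IsPreconnected S) (hSo : IsOpen S)
    {a b : ℂ → ℂ} (ha : AnalyticOnNhd ℂ a S) (hb : AnalyticOnNhd ℂ b S)
    (hab : ∀ z ∈ S, a z * b z = 0) :
    (∀ z ∈ S, a z = 0) ∨ (∀ z ∈ S, b z = 0) := by
  by_cases h : ∀ z ∈ S, a z = 0
  · exact Or.inl h
  · push_neg at h
    obtain ⟨z₀, hz₀S, hz₀⟩ := h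
    right
    have hev : ∀ᶠ z in 𝓝 z₀, b z = 0 := by
      have h1 : ∀ᶠ z in 𝓝 z₀, a z ≠ 0 :=
        (ha z₀ hz₀S).continuousAt.eventually_ne hz₀
      have h2 : ∀ᶠ z in 𝓝 z₀, z ∈ S := hSo.mem_nhds hz₀S
      filter_upwards [h1, h2] with z hz1 hz2
      have := hab z hz2
      exact (mul_eq_zero.1 this).resolve_left hz1
    have hfreq : ∃ᶠ z in 𝓝[≠] z₀, b z = 0 :=
      ((hev.filter_mono nhdsWithin_le_nhds)).frequently
    intro z hz
    exact hb.eqOn_zero_of_preconnected_of_frequently_eq_zero hS hz₀S hfreq hz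

lemma frequently_real_zero {h : ℂ → ℂ} (hz : ∀ t : ℝ, h (t : ℂ) = 0) :
    ∃ᶠ z in 𝓝[≠] (0 : ℂ), h z = 0 := by
  have ht : Filter.Tendsto (fun t : ℝ => (t : ℂ)) (𝓝[≠] (0 : ℝ)) (𝓝[≠] (0 : ℂ)) := by
    rw [tendsto_nhdsWithin_iff]
    constructor
    · exact Filter.Tendsto.mono_left (by exact_mod_cast Complex.continuous_ofReal.tendsto 0)
        nhdsWithin_le_nhds
    · filter_upwards [self_mem_nhdsWithin] with t ht
      simp only [Set.mem_compl_iff, Set.mem_singleton_iff] at ht ⊢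
      exact_mod_cast ht
  have : ∃ᶠ t in 𝓝[≠] (0 : ℝ), h ((t : ℝ) : ℂ) = 0 :=
    Filter.Eventually.frequently (Filter.Eventually.of_forall fun t => hz t)
  exact ht.frequently this


lemma fourier_injective {f : ℝ → ℂ} (hfc : Continuous f) (hfi : Integrable f)
    (h : ∀ ξ : ℝ, 𝓕 f ξ = 0) : ∀ x : ℝ, f x = 0 := by
  intro x
  have hFT : 𝓕 f = fun _ => (0 : ℂ) := funext h
  have hint : Integrable (𝓕 f) := by
    rw [hFT]; exact integrable_zero _ _ _
  have := MeasureTheory.Integrable.fourierInv_fourier_eq (v := x) hfi hint hfc.continuousAt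
  rw [← this, hFT]
  rw [fourierInv_eq]
  simp



theorem stmt16 (f g : ℝ → ℂ) (hfc : Continuous f) (hgc : Continuous g)
    (hf : Integrable (fun x : ℝ => ‖f x‖ * Real.exp |x|))
    (hg : Integrable (fun x : ℝ => ‖g x‖ * Real.exp |x|)) :
    (∀ᵐ x : ℝ ∂volume, HFconv f g x = 0) ↔
      ((∀ᵐ x : ℝ ∂volume, f x = 0) ∨ (∀ᵐ x : ℝ ∂volume, g x = 0)) := by
  have hfi : Integrable f := integrable_of_wt hfc hf
  have hgi : Integrable g := integrable_of_wt hgc hg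
  constructor
  · intro hconv
    have hsq : Real.sqrt (2 * Real.pi) ≠ 0 :=
      ne_of_gt (Real.sqrt_pos.2 (by positivity))
    have hc : (1 / (2 * (Real.sqrt (2 * Real.pi) : ℂ))) ≠ 0 :=
      one_div_ne_zero (mul_ne_zero two_ne_zero (Complex.ofReal_ne_zero.2 hsq))
    have h0 : ∀ᵐ x : ℝ ∂volume, (∫ y : ℝ, g y * (f (x + y) + f (x - y)
        + Complex.I * f (-x - y) - Complex.I * f (-x + y))) = 0 := by
      filter_upwards [hconv] with x hx
      rw [HFconv] at hx
      exact (mul_eq_zero.1 hx).resolve_left hc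
    have hP := fun ξ : ℝ => P_zero hfc hgc hfi hgi h0 ξ
    have hprod : ∀ ξ : ℝ, FT f (ξ : ℂ) * (FT g (ξ : ℂ) * FT g (-(ξ : ℂ))) = 0 := by
      intro ξ
      have h1 := hP ξ
      have h2 := hP (-ξ)
      rw [Complex.ofReal_neg, neg_neg] at h2
      linear_combination ((FT g (ξ:ℂ) + FT g (-(ξ:ℂ)))/4) * h1
        - (Complex.I * (FT g (-(ξ:ℂ)) - FT g (ξ:ℂ))/4) * h2
        - (FT f (ξ:ℂ) * (FT g (ξ:ℂ) - FT g (-(ξ:ℂ)))^2/4) * Complex.I_sq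
    have haf := FT_analytic hfc hf
    have hag := FT_analytic hgc hg
    have hagneg : AnalyticOnNhd ℂ (fun z => FT g (-z)) strip := by
      have h1 : AnalyticOnNhd ℂ (FT g ∘ fun z : ℂ => -z) strip :=
        hag.comp (analyticOnNhd_id.neg) (fun z hz => neg_mem_strip hz)
      exact h1
    have hb : AnalyticOnNhd ℂ (fun z => FT g z * FT g (-z)) strip := hag.mul hagneg
    have hzeroS : ∀ z ∈ strip, FT f z * (FT g z * FT g (-z)) = 0 := by
      have hh : AnalyticOnNhd ℂ (fun z => FT f z * (FT g z * FT g (-z))) strip := haf.mul hb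
      have hfreq : ∃ᶠ z in nhdsWithin (0 : ℂ) {(0:ℂ)}ᶜ,
          FT f z * (FT g z * FT g (-z)) = 0 :=
        frequently_real_zero hprod
      have h0mem : (0 : ℂ) ∈ strip := by simpa using real_mem_strip 0
      exact fun z hz => hh.eqOn_zero_of_preconnected_of_frequently_eq_zero
        isPreconnected_strip h0mem hfreq hz
    rcases analytic_mul_eq_zero isPreconnected_strip isOpen_strip haf hb hzeroS with hU | hV
    · left
      have hFf : ∀ ξ : ℝ, 𝓕 f ξ = 0 := fun ξ => by
        rw [← FT_real_eq]
        exact hU _ (real_mem_strip ξ)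
      exact Filter.Eventually.of_forall (fourier_injective hfc hfi hFf)
    · right
      rcases analytic_mul_eq_zero isPreconnected_strip isOpen_strip hag hagneg hV with h | h
      · have hFg : ∀ ξ : ℝ, 𝓕 g ξ = 0 := fun ξ => by
          rw [← FT_real_eq]
          exact h _ (real_mem_strip ξ)
        exact Filter.Eventually.of_forall (fourier_injective hgc hgi hFg)
      · have hFg : ∀ ξ : ℝ, 𝓕 g ξ = 0 := fun ξ => by
          rw [← FT_real_eq]
          have := h (-(ξ : ℂ)) (neg_mem_strip (real_mem_strip ξ))
          simpa using this
        exact Filter.Eventually.of_forall (fourier_injective hgc hgi hFg)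
  · rintro (hf0 | hg0)
    · have hfeq : f = fun _ => (0 : ℂ) :=
        (Continuous.ae_eq_iff_eq (μ := volume) hfc continuous_const).1 hf0
      refine Filter.Eventually.of_forall fun x => ?_
      rw [HFconv]
      have hpt : ∀ y : ℝ, g y * (f (x + y) + f (x - y)
          + Complex.I * f (-x - y) - Complex.I * f (-x + y)) = 0 := fun y => by
        rw [hfeq]; simp
      rw [integral_congr_ae (ae_of_all _ hpt)]
      simp
    · have hgeq : g = fun _ => (0 : ℂ) :=
        (Continuous.ae_eq_iff_eq (μ := volume) hgc continuous_const).1 hg0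
      refine Filter.Eventually.of_forall fun x => ?_
      rw [HFconv]
      have hpt : ∀ y : ℝ, g y * (f (x + y) + f (x - y)
          + Complex.I * f (-x - y) - Complex.I * f (-x + y)) = 0 := fun y => by
        rw [hgeq]; simp
      rw [integral_congr_ae (ae_of_all _ hpt)]
      simp
end

section
/- There is no function U ∈ L¹(ℝ) that acts as a unit for the Hartley–Fourier convolution, i.e. there is no U ∈ L¹(ℝ) with (f ∗_{H₁,F} U) = f for all f ∈ L¹(ℝ). -/
open MeasureTheory Real Complex Filter Topology
open scoped FourierTransform

noncomputable def Ff (w : ℝ) : ℝ → ℂ := fun x =>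
  Complex.exp (-(x : ℂ) ^ 2) *
    Complex.exp (((2 * Real.pi * -(x * w) : ℝ) : ℂ) * Complex.I)

lemma gauss_cont : Continuous fun y : ℝ => Complex.exp (-(y : ℂ) ^ 2) :=
  Complex.continuous_exp.comp
    (((continuous_pow 2).comp Complex.continuous_ofReal).neg)

lemma gauss_norm (x : ℝ) : ‖Complex.exp (-(x : ℂ) ^ 2)‖ = Real.exp (-(x ^ 2)) := by
  have h : (-(x : ℂ) ^ 2) = ((-(x ^ 2) : ℝ) : ℂ) := by push_cast; ring
  rw [h, Complex.norm_exp, Complex.ofReal_re]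

lemma gauss_norm_le (x : ℝ) : ‖Complex.exp (-(x : ℂ) ^ 2)‖ ≤ 1 := by
  rw [gauss_norm]
  exact Real.exp_le_one_iff.mpr (neg_nonpos.mpr (sq_nonneg x))

lemma Ff_norm (w x : ℝ) : ‖Ff w x‖ = Real.exp (-(x ^ 2)) := by
  rw [Ff, norm_mul, gauss_norm, Complex.norm_exp_ofReal_mul_I,
    mul_one]

lemma Ff_norm_le (w x : ℝ) : ‖Ff w x‖ ≤ 1 := by
  rw [Ff_norm]
  exact Real.exp_le_one_iff.mpr (neg_nonpos.mpr (sq_nonneg x))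

lemma Ff_cont (w : ℝ) : Continuous (Ff w) := by
  refine gauss_cont.mul (Complex.continuous_exp.comp ?_)
  exact (Complex.continuous_ofReal.comp (by fun_prop)).mul continuous_const

lemma Ff_integrable (w : ℝ) : Integrable (Ff w) := by
  refine (integrable_exp_neg_mul_sq (b := 1) one_pos).mono'
    (Ff_cont w).aestronglyMeasurable ?_
  filter_upwards with x
  rw [Ff_norm]
  simp

lemma Ff_zero (w : ℝ) : Ff w 0 = 1 := by
  simp [Ff]

theorem stmt17 :
    ¬ ∃ U : ℝ → ℂ, Integrable U ∧
      ∀ f : ℝ → ℂ, Integrable f → HFconv f U =ᶠ[ae volume] f := by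
  rintro ⟨U, hU, hunit⟩
  set g : ℝ → ℂ := fun y => Complex.exp (-(y : ℂ) ^ 2) * U y with hg
  have hgi : Integrable g :=
    hU.bdd_mul gauss_cont.aestronglyMeasurable (c := 1) (Filter.Eventually.of_forall gauss_norm_le)
  set Φ : ℝ → ℂ := fun w => ∫ v : ℝ, 𝐞 (-(v * w)) • g v with hΦdef
  -- Each Fourier-type integrand is integrable
  have hΦint : ∀ w : ℝ, Integrable (fun v : ℝ => 𝐞 (-(v * w)) • g v) := fun w =>
    by have := (Real.fourierIntegral_convergent_iff w).2 hgi; simpa [mul_comm] using this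
  -- For every w, HFconv (Ff w) U equals Ff w everywhere (continuity + a.e. equality)
  have hIz : ∀ z : ℂ, ‖Complex.I * z‖ = ‖z‖ := fun z => by
    rw [norm_mul, Complex.norm_I, one_mul]
  have hval : ∀ w : ℝ, HFconv (Ff w) U 0 = 1 := by
    intro w
    have hcont : Continuous (HFconv (Ff w) U) := by
      unfold HFconv
      refine continuous_const.mul ?_
      refine continuous_of_dominated (bound := fun y => 4 * ‖U y‖) ?_ ?_
          (hU.norm.const_mul 4) ?_
      · intro x
        have hc := Ff_cont w
        have hcy : Continuous fun y : ℝ => Ff w (x + y) + Ff w (x - y) +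
            Complex.I * Ff w (-x - y) - Complex.I * Ff w (-x + y) := by fun_prop
        exact hU.aestronglyMeasurable.mul hcy.aestronglyMeasurable
      · intro x
        filter_upwards with y
        rw [norm_mul]
        have h1 := Ff_norm_le w (x + y)
        have h2 := Ff_norm_le w (x - y)
        have h3 := Ff_norm_le w (-x - y)
        have h4 := Ff_norm_le w (-x + y)
        have hb : ‖Ff w (x + y) + Ff w (x - y) + Complex.I * Ff w (-x - y) -
            Complex.I * Ff w (-x + y)‖ ≤ 4 := by
          calc ‖Ff w (x + y) + Ff w (x - y) + Complex.I * Ff w (-x - y) -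
                Complex.I * Ff w (-x + y)‖
              ≤ ‖Ff w (x + y) + Ff w (x - y) + Complex.I * Ff w (-x - y)‖ +
                ‖Complex.I * Ff w (-x + y)‖ := norm_sub_le _ _
            _ ≤ ‖Ff w (x + y) + Ff w (x - y)‖ + ‖Complex.I * Ff w (-x - y)‖ +
                ‖Complex.I * Ff w (-x + y)‖ := by
                gcongr; exact norm_add_le _ _
            _ ≤ 4 := by
                rw [hIz, hIz]
                have := norm_add_le (Ff w (x + y)) (Ff w (x - y))
                linarith
        calc ‖U y‖ * ‖Ff w (x + y) + Ff w (x - y) + Complex.I * Ff w (-x - y) -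
              Complex.I * Ff w (-x + y)‖
            ≤ ‖U y‖ * 4 := by gcongr
          _ = 4 * ‖U y‖ := by ring
      · filter_upwards with y
        have hc := Ff_cont w
        fun_prop
    have heq : HFconv (Ff w) U = Ff w :=
      (hcont.ae_eq_iff_eq volume (Ff_cont w)).mp (hunit (Ff w) (Ff_integrable w))
    rw [heq, Ff_zero]
  -- Compute the value at 0 in terms of Φ
  have hzero : ∀ w : ℝ, HFconv (Ff w) U 0 =
      (1 / (2 * Real.sqrt (2 * Real.pi)) : ℂ) *
        ((1 - Complex.I) • Φ w + (1 + Complex.I) • Φ (-w)) := by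
    intro w
    unfold HFconv
    congr 1
    have hpt : ∀ y : ℝ,
        U y * (Ff w (0 + y) + Ff w (0 - y) + Complex.I * Ff w (-0 - y) -
          Complex.I * Ff w (-0 + y)) =
        (1 - Complex.I) • (𝐞 (-(y * w)) • g y) +
          (1 + Complex.I) • (𝐞 (-(y * (-w))) • g y) := by
      intro y
      simp only [zero_add, zero_sub, neg_zero, smul_eq_mul, Circle.smul_def,
        Real.fourierChar_apply, hg, Ff]
      have h1 : Complex.exp (-((((-y : ℝ)) : ℂ)) ^ 2) =
          Complex.exp (-(y : ℂ) ^ 2) := by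
        congr 1
        push_cast
        ring
      have h2 : ((2 * Real.pi * -((-y) * w) : ℝ) : ℂ) =
          ((2 * Real.pi * -(y * (-w)) : ℝ) : ℂ) := by
        norm_cast
        ring
      rw [h1, h2]
      ring
    have h1 : Integrable (fun v : ℝ => (1 - Complex.I) • (𝐞 (-(v * w)) • g v)) :=
      (hΦint w).smul (1 - Complex.I)
    have h2 : Integrable (fun v : ℝ => (1 + Complex.I) • (𝐞 (-(v * (-w))) • g v)) :=
      (hΦint (-w)).smul (1 + Complex.I)
    rw [integral_congr_ae (Filter.Eventually.of_forall hpt), integral_add h1 h2,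
      integral_smul, integral_smul]
  -- Riemann-Lebesgue: Φ tends to 0 both ways
  have hRL : Tendsto Φ (cocompact ℝ) (𝓝 0) :=
    Real.tendsto_integral_exp_smul_cocompact g
  have hT1 : Tendsto Φ atTop (𝓝 0) :=
    hRL.mono_left (by rw [cocompact_eq_atBot_atTop]; exact le_sup_right)
  have hT2 : Tendsto (fun w : ℝ => Φ (-w)) atTop (𝓝 0) :=
    hRL.comp (tendsto_neg_atTop_atBot.mono_right
      (by rw [cocompact_eq_atBot_atTop]; exact le_sup_left))
  have hT : Tendsto (fun w : ℝ => HFconv (Ff w) U 0) atTop (𝓝 0) := by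
    simp only [hzero]
    have := (((hT1.const_smul (1 - Complex.I)).add
      (hT2.const_smul (1 + Complex.I))).const_mul
      ((1 / (2 * Real.sqrt (2 * Real.pi)) : ℂ)))
    simpa using this
  have hT' : Tendsto (fun _ : ℝ => (1 : ℂ)) atTop (𝓝 0) := by
    simpa only [hval] using hT
  exact one_ne_zero (tendsto_nhds_unique tendsto_const_nhds hT')
end
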